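/- arXiv:math/0312486 — 6 statements merged into one kernel-verified Lean document; each statement's English description precedes it below -/
import Mathlib

section
/- Let R be an F-finite F-pure reduced ring of characteristic p > 0 and a ⊆ R an ideal with a ∩ R° ≠ ∅. Then c(a) = sup{ s ∈ ℝ_{≥0} : the pair (R, a^s) is strongly F-pure }. -/
/-! Basic notions for F-pure thresholds (Takagi–Watanabe).
Fix a prime `p`. For `q = p ^ e`, `SplitsFrob R q d` says that the map
`d^{1/q} R ↪ R^{1/q}` splits as an `R`-module homomorphism: equivalently, there is an
additive map `ψ : R → R` with `ψ (r ^ q * x) = r * ψ x` for all `r x : R` and `ψ d = 1`. -/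
def SplitsFrob (R : Type*) [CommRing R] (q : ℕ) (d : R) : Prop :=
  ∃ ψ : R →+ R, (∀ r x : R, ψ (r ^ q * x) = r * ψ x) ∧ ψ d = 1

/-- `R°`: the set of elements of `R` not contained in any minimal prime of `R`. -/
def Rcirc (R : Type*) [CommRing R] : Set R :=
  {x : R | ∀ P ∈ minimalPrimes R, x ∉ P}

/-- The pair `(R, a^t)` is F-pure: for all sufficiently large `q = p ^ e` there exists
`d ∈ a ^ ⌊t (q - 1)⌋` such that `d^{1/q} R ↪ R^{1/q}` splits. -/
def FPurePair (R : Type*) [CommRing R] (p : ℕ) (a : Ideal R) (t : ℝ) : Prop :=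
  ∃ e₀ : ℕ, ∀ e : ℕ, e₀ ≤ e →
    ∃ d ∈ a ^ ⌊t * ((p : ℝ) ^ e - 1)⌋₊, SplitsFrob R (p ^ e) d

/-- The pair `(R, a^t)` is strongly F-pure: there exist `q = p ^ e` and
`d ∈ a ^ ⌈t q⌉` such that `d^{1/q} R ↪ R^{1/q}` splits. -/
def StronglyFPurePair (R : Type*) [CommRing R] (p : ℕ) (a : Ideal R) (t : ℝ) : Prop :=
  ∃ e : ℕ, ∃ d ∈ a ^ ⌈t * (p : ℝ) ^ e⌉₊, SplitsFrob R (p ^ e) d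

/-- The pair `(R, a^t)` is strongly F-regular: for every `c ∈ R°` there exist `q = p ^ e`
and `d ∈ a ^ ⌈t q⌉` such that `(c d)^{1/q} R ↪ R^{1/q}` splits. -/
def StronglyFRegularPair (R : Type*) [CommRing R] (p : ℕ) (a : Ideal R) (t : ℝ) : Prop :=
  ∀ c ∈ Rcirc R, ∃ e : ℕ, ∃ d ∈ a ^ ⌈t * (p : ℝ) ^ e⌉₊, SplitsFrob R (p ^ e) (c * d)

/-- `R` is F-pure: for every `q = p ^ e`, the map `R ↪ R^{1/q}` splits. -/
def FPureRing (R : Type*) [CommRing R] (p : ℕ) : Prop :=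
  ∀ e : ℕ, SplitsFrob R (p ^ e) 1

/-- `R` is strongly F-regular: for every `c ∈ R°` there is `q = p ^ e` such that
`c^{1/q} R ↪ R^{1/q}` splits. -/
def StronglyFRegularRing (R : Type*) [CommRing R] (p : ℕ) : Prop :=
  ∀ c ∈ Rcirc R, ∃ e : ℕ, SplitsFrob R (p ^ e) c

/-- `R` is F-finite: `R^{1/p}` is a finitely generated `R`-module; equivalently, there is a
finite set `s` such that every element of `R` is an `R^p`-linear combination of `s`. -/
def FFinite (R : Type*) [CommRing R] (p : ℕ) : Prop :=
  ∃ s : Finset R, ∀ x : R, ∃ c : R → R, x = ∑ y ∈ s, c y ^ p * y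

/-- The F-pure threshold `c(a)` of an ideal `a`. -/
noncomputable def fpt (R : Type*) [CommRing R] (p : ℕ) (a : Ideal R) : ℝ :=
  sSup {s : ℝ | 0 ≤ s ∧ FPurePair R p a s}

/-- The height of an ideal: the infimum of the heights of the primes containing it. -/
noncomputable def idealHeight {R : Type*} [CommRing R] (I : Ideal R) : ℕ∞ :=
  ⨅ (P : PrimeSpectrum R) (_ : I ≤ P.asIdeal), Order.height P

lemma splitsFrob_mul {R : Type*} [CommRing R] {q q' : ℕ} {d : R}
    (h : SplitsFrob R q d) (h1 : SplitsFrob R q' 1) : SplitsFrob R (q * q') (d ^ q') := by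
  obtain ⟨ψ, hψ, hψd⟩ := h
  obtain ⟨φ, hφ, hφ1⟩ := h1
  refine ⟨ψ.comp φ, ?_, ?_⟩
  · intro r x
    simp only [AddMonoidHom.comp_apply]
    rw [pow_mul, hφ, hψ]
  · simp only [AddMonoidHom.comp_apply]
    have hd : φ (d ^ q') = d := by simpa [hφ1] using hφ d 1
    rw [hd, hψd]

lemma strong_to_pure {R : Type*} [CommRing R] {p : ℕ} (hp : 2 ≤ p) (hFP : FPureRing R p)
    {a : Ideal R} {t : ℝ} (ht : 0 ≤ t) (h : StronglyFPurePair R p a t) : FPurePair R p a t := by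
  obtain ⟨e, d, hd, hψ⟩ := h
  refine ⟨e, fun e' he' => ?_⟩
  set e₁ := e' - e with he₁
  have hee : e' = e + e₁ := by omega
  refine ⟨d ^ p ^ e₁, ?_, ?_⟩
  · have hmem : d ^ p ^ e₁ ∈ a ^ (⌈t * (p : ℝ) ^ e⌉₊ * p ^ e₁) := by
      rw [pow_mul]
      exact Ideal.pow_mem_pow hd _
    refine Ideal.pow_le_pow_right ?_ hmem
    have h1 : t * ((p : ℝ) ^ e' - 1) ≤ (⌈t * (p : ℝ) ^ e⌉₊ * p ^ e₁ : ℕ) := by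
      push_cast
      have h2 : t * ((p : ℝ) ^ e' - 1) ≤ t * (p : ℝ) ^ e' := by
        have : (0:ℝ) ≤ t * 1 := by linarith
        nlinarith [mul_le_mul_of_nonneg_left (by linarith : (p:ℝ)^e' - 1 ≤ (p:ℝ)^e') ht]
      have h3 : t * (p : ℝ) ^ e' = (t * (p:ℝ) ^ e) * (p:ℝ) ^ e₁ := by
        rw [hee, pow_add]; ring
      have h4 : t * (p:ℝ) ^ e ≤ (⌈t * (p : ℝ) ^ e⌉₊ : ℝ) := Nat.le_ceil _
      have h5 : (0:ℝ) ≤ (p:ℝ) ^ e₁ := by positivity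
      calc t * ((p : ℝ) ^ e' - 1) ≤ t * (p : ℝ) ^ e' := h2
        _ = (t * (p:ℝ) ^ e) * (p:ℝ) ^ e₁ := h3
        _ ≤ (⌈t * (p : ℝ) ^ e⌉₊ : ℝ) * (p:ℝ) ^ e₁ := by
            exact mul_le_mul_of_nonneg_right h4 h5
    calc ⌊t * ((p : ℝ) ^ e' - 1)⌋₊ ≤ ⌊((⌈t * (p : ℝ) ^ e⌉₊ * p ^ e₁ : ℕ) : ℝ)⌋₊ :=
          Nat.floor_mono h1
      _ = ⌈t * (p : ℝ) ^ e⌉₊ * p ^ e₁ := Nat.floor_natCast _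
  · rw [hee, pow_add]
    exact splitsFrob_mul hψ (hFP e₁)

lemma pure_to_strong {R : Type*} [CommRing R] {p : ℕ} (hp : 2 ≤ p)
    {a : Ideal R} {s t : ℝ} (hs : 0 ≤ s) (hst : s < t) (h : FPurePair R p a t) :
    StronglyFPurePair R p a s := by
  obtain ⟨e₀, h⟩ := h
  have hp1 : (1:ℝ) < (p:ℝ) := by exact_mod_cast hp
  obtain ⟨e₁, he₁⟩ := pow_unbounded_of_one_lt ((1 + t) / (t - s)) hp1
  set e := max e₀ e₁ with he
  have hpe : ((1 + t) / (t - s)) < (p:ℝ) ^ e := by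
    refine lt_of_lt_of_le he₁ ?_
    exact pow_le_pow_right₀ (by linarith) (le_max_right _ _)
  have hts : (0:ℝ) < t - s := by linarith
  have hkey : s * (p:ℝ) ^ e + 1 ≤ t * ((p:ℝ) ^ e - 1) := by
    have := (div_lt_iff₀ hts).mp hpe
    nlinarith
  obtain ⟨d, hd, hψ⟩ := h e (le_max_left _ _)
  refine ⟨e, d, ?_, hψ⟩
  refine Ideal.pow_le_pow_right ?_ hd
  rw [Nat.le_floor_iff]
  · have hse : (0:ℝ) ≤ s * (p:ℝ) ^ e := by positivity
    have : (⌈s * (p : ℝ) ^ e⌉₊ : ℝ) < s * (p:ℝ) ^ e + 1 := Nat.ceil_lt_add_one hse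
    linarith
  · have : (1:ℝ) ≤ (p:ℝ) ^ e := one_le_pow₀ (le_of_lt hp1)
    nlinarith [le_trans hs (le_of_lt hst)]

/-- `c(a)` equals the supremum of all `s ≥ 0` such that `(R, aˢ)` is
strongly F-pure. -/
theorem stmt2 (R : Type*) [CommRing R] [IsNoetherianRing R] [IsReduced R]
    (p : ℕ) (hp : p.Prime) [CharP R p] (hFF : FFinite R p) (hFP : FPureRing R p)
    (a : Ideal R) (ha : ((a : Set R) ∩ Rcirc R).Nonempty) :
    fpt R p a = sSup {s : ℝ | 0 ≤ s ∧ StronglyFPurePair R p a s} := by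
  have hp2 : 2 ≤ p := hp.two_le
  set A := {s : ℝ | 0 ≤ s ∧ FPurePair R p a s} with hA
  set B := {s : ℝ | 0 ≤ s ∧ StronglyFPurePair R p a s} with hB
  have hBA : B ⊆ A := fun s hs => ⟨hs.1, strong_to_pure hp2 hFP hs.1 hs.2⟩
  have h0B : (0:ℝ) ∈ B := by
    refine ⟨le_refl 0, 0, 1, ?_, ?_⟩
    · simp
    · simpa using hFP 0
  have h0A : (0:ℝ) ∈ A := hBA h0B
  show sSup A = sSup B
  by_cases hb : BddAbove A
  · have hbB : BddAbove B := BddAbove.mono hBA hb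
    refine le_antisymm ?_ (csSup_le_csSup hb ⟨0, h0B⟩ hBA)
    refine csSup_le ⟨0, h0A⟩ (fun x hx => ?_)
    by_contra hlt
    push_neg at hlt
    have hB0 : (0:ℝ) ≤ sSup B := le_csSup hbB h0B
    set s := (sSup B + x) / 2 with hsdef
    have hs1 : sSup B < s := by rw [hsdef]; linarith
    have hs2 : s < x := by rw [hsdef]; linarith
    have hs0 : 0 ≤ s := by linarith
    have hsB : s ∈ B := ⟨hs0, pure_to_strong hp2 hs0 hs2 hx.2⟩
    exact absurd (le_csSup hbB hsB) (not_le.mpr hs1)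
  · have hbB : ¬ BddAbove B := by
      intro ⟨M, hM⟩
      apply hb
      refine ⟨max M 0 + 1, fun x hx => ?_⟩
      by_contra hlt
      push_neg at hlt
      set s := max M 0 + 1/2 with hsdef
      have hs0 : 0 ≤ s := by
        have := le_max_right M (0:ℝ); rw [hsdef]; linarith
      have hs2 : s < x := by
        have : max M 0 + 1 < x := hlt
        rw [hsdef]; linarith
      have hsB : s ∈ B := ⟨hs0, pure_to_strong hp2 hs0 hs2 hx.2⟩
      have h1 : s ≤ M := hM hsB
      have h2 : M < s := by
        rw [hsdef]; have := le_max_left M (0:ℝ); linarith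
      exact absurd h1 (not_le.mpr h2)
    rw [Real.sSup_of_not_bddAbove hb, Real.sSup_of_not_bddAbove hbB]
end

section
/- Let R be an F-finite F-pure reduced ring of characteristic p > 0 and a ⊆ R an ideal with a ∩ R° ≠ ∅. Assume that for every prime ideal P of R that does not contain a, the localization R_P is a strongly F-regular ring. Then c(a) = sup{ s ∈ ℝ_{≥0} : the pair (R, a^s) is strongly F-regular }. -/
namespace FptTW

variable {R : Type*} [CommRing R]

/-- `p^e`-semilinearity of an additive map. -/
def Semilin (R : Type*) [CommRing R] (q : ℕ) (ψ : R →+ R) : Prop :=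
  ∀ r x : R, ψ (r ^ q * x) = r * ψ x

lemma Semilin.comp {q₁ q₂ : ℕ} {ψ₁ ψ₂ : R →+ R} (h₁ : Semilin R q₁ ψ₁)
    (h₂ : Semilin R q₂ ψ₂) : Semilin R (q₂ * q₁) (ψ₂.comp ψ₁) := by
  intro r x
  simp only [AddMonoidHom.comp_apply]
  rw [pow_mul, h₁, h₂]

lemma Semilin.premul {q : ℕ} {ψ : R →+ R} (h : Semilin R q ψ) (w : R) :
    Semilin R q (ψ.comp (AddMonoidHom.mulLeft w)) := by
  intro r x
  show ψ (w * (r ^ q * x)) = r * ψ (w * x)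
  rw [show w * (r ^ q * x) = r ^ q * (w * x) by ring, h]

lemma Semilin.postmul {q : ℕ} {ψ : R →+ R} (h : Semilin R q ψ) (u : R) :
    Semilin R q ((AddMonoidHom.mulLeft u).comp ψ) := by
  intro r x
  show u * ψ (r ^ q * x) = r * (u * ψ x)
  rw [h]; ring

/-- Easy direction: a strongly F-regular pair is an F-pure pair. -/
lemma sfrp_to_fpure {p : ℕ} (hp : p.Prime) (hFP : FPureRing R p) {a : Ideal R}
    (ha : ((a : Set R) ∩ Rcirc R).Nonempty) {s : ℝ} (hs : 0 ≤ s)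
    (h : StronglyFRegularPair R p a s) : FPurePair R p a s := by
  obtain ⟨c₀, hc₀a, hc₀⟩ := ha
  obtain ⟨e₁, d, hd, ψ, hψ, hψ1⟩ := h c₀ hc₀
  refine ⟨e₁, fun e he => ?_⟩
  obtain ⟨e'', rfl⟩ := Nat.exists_eq_add_of_le he
  obtain ⟨θ, hθ, hθ1⟩ := hFP e''
  set N : ℕ := ⌈s * (p:ℝ)^e₁⌉₊ with hN
  refine ⟨(c₀*d)^(p^e''), ?_, ?_⟩
  · -- ideal membership
    have h1 : c₀ * d ∈ a ^ (1 + N) := by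
      rw [pow_add, pow_one]
      exact Ideal.mul_mem_mul hc₀a hd
    have h2 : (c₀*d)^(p^e'') ∈ a ^ ((1+N) * p^e'') := by
      rw [pow_mul]
      exact Ideal.pow_mem_pow h1 _
    refine Ideal.pow_le_pow_right ?_ h2
    -- ⌊s * ((p:ℝ)^(e₁+e'') - 1)⌋₊ ≤ (1+N) * p^e''
    have hfl : s * ((p:ℝ)^(e₁+e'') - 1) ≤ (((1+N) * p^e'' : ℕ) : ℝ) := by
      have hppos : (0:ℝ) ≤ (p:ℝ)^e'' := by positivity
      have hle1 : s * ((p:ℝ)^(e₁+e'') - 1) ≤ s * (p:ℝ)^(e₁+e'') := by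
        have : (p:ℝ)^(e₁+e'') - 1 ≤ (p:ℝ)^(e₁+e'') := by linarith
        exact mul_le_mul_of_nonneg_left this hs
      have hle2 : s * (p:ℝ)^(e₁+e'') = (s * (p:ℝ)^e₁) * (p:ℝ)^e'' := by
        rw [pow_add]; ring
      have hle3 : (s * (p:ℝ)^e₁) * (p:ℝ)^e'' ≤ (N:ℝ) * (p:ℝ)^e'' :=
        mul_le_mul_of_nonneg_right (Nat.le_ceil _) hppos
      have hle4 : (N:ℝ) * (p:ℝ)^e'' ≤ (((1+N) * p^e'' : ℕ) : ℝ) := by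
        push_cast
        nlinarith [hppos]
      linarith
    calc ⌊s * ((p:ℝ)^(e₁+e'') - 1)⌋₊ ≤ ⌊(((1+N) * p^e'' : ℕ) : ℝ)⌋₊ := Nat.floor_le_floor hfl
      _ = (1+N) * p^e'' := Nat.floor_natCast _
  · -- the splitting
    refine ⟨ψ.comp θ, ?_, ?_⟩
    · have := Semilin.comp (q₁ := p^e'') (q₂ := p^e₁) hθ hψ
      rwa [← pow_add] at this
    · have harg : (c₀*d)^(p^e'') = (c₀*d)^(p^e'') * 1 := by ring
      simp only [AddMonoidHom.comp_apply]
      rw [harg, hθ, hθ1, mul_one, hψ1]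

universe u

/-- Iterated F-finiteness: generators for `R` over the `p^E`-th powers. -/
lemma ffin_pow {R : Type u} [CommRing R] {p : ℕ} (hp : p.Prime) [CharP R p]
    (hFF : FFinite R p) (E : ℕ) :
    ∃ (ι : Type u) (_ : Fintype ι) (g : ι → R), ∀ x : R, ∃ aa : ι → R,
      x = ∑ i : ι, (aa i) ^ (p ^ E) * g i := by
  haveI : Fact p.Prime := ⟨hp⟩
  induction E with
  | zero =>
    refine ⟨PUnit, inferInstance, fun _ => 1, fun x => ⟨fun _ => x, by simp⟩⟩
  | succ E ih =>
    obtain ⟨ι, _, g, hg⟩ := ih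
    obtain ⟨s₁, hs₁⟩ := hFF
    refine ⟨{y // y ∈ s₁} × ι, inferInstance, fun ji => (g ji.2)^p * (ji.1 : R), fun x => ?_⟩
    obtain ⟨c, hc⟩ := hs₁ x
    choose aa haa using fun y : {y // y ∈ s₁} => hg (c y)
    refine ⟨fun ji => aa ji.1 ji.2, ?_⟩
    rw [Fintype.sum_prod_type]
    rw [hc, ← Finset.sum_attach s₁ (fun y => c y ^ p * y)]
    refine Finset.sum_congr rfl fun y _ => ?_
    have hstep : (c (y:R))^p = ∑ i : ι, (aa y i)^(p^(E+1)) * (g i)^p := by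
      rw [haa y, sum_pow_char]
      refine Finset.sum_congr rfl fun i _ => ?_
      rw [mul_pow, ← pow_mul, ← pow_succ]
    rw [hstep, Finset.sum_mul]
    refine Finset.sum_congr rfl fun i _ => ?_
    ring

/-- Transfer of a splitting on a localization at a prime back to the global ring. -/
lemma transfer {R : Type u} [CommRing R] [IsNoetherianRing R] {p : ℕ} (hp : p.Prime)
    [CharP R p] (hFF : FFinite R p) (P : Ideal R) [hP : P.IsPrime] (z : R) (E : ℕ)
    (h : SplitsFrob (Localization.AtPrime P) (p ^ E)
      (algebraMap R (Localization.AtPrime P) z)) :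
    ∃ ψ : R →+ R, Semilin R (p ^ E) ψ ∧ ψ z ∉ P := by
  classical
  haveI : Fact p.Prime := ⟨hp⟩
  set q := p ^ E with hq
  have hq0 : q ≠ 0 := (pow_pos hp.pos E).ne'
  obtain ⟨ι, _, g, hg⟩ := ffin_pow hp hFF E
  set RP := Localization.AtPrime P
  set f := algebraMap R RP with hf
  obtain ⟨Θ, hΘ, hΘz⟩ := h
  -- the module of relations
  set K : Submodule R (ι → R) :=
    { carrier := {v | ∑ i : ι, (v i)^q * g i = 0}
      add_mem' := by
        intro v w hv hw
        simp only [Set.mem_setOf_eq] at *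
        have : ∀ i : ι, ((v + w) i)^q = (v i)^q + (w i)^q := by
          intro i
          simpa [hq] using add_pow_char_pow (R := R) (v i) (w i) p E
        calc ∑ i : ι, ((v+w) i)^q * g i = ∑ i : ι, ((v i)^q * g i + (w i)^q * g i) := by
              refine Finset.sum_congr rfl fun i _ => ?_
              rw [this i, add_mul]
          _ = 0 := by rw [Finset.sum_add_distrib, hv, hw, add_zero]
      zero_mem' := by
        simp only [Set.mem_setOf_eq, Pi.zero_apply, zero_pow hq0, zero_mul,
          Finset.sum_const_zero]
      smul_mem' := by
        intro r v hv
        simp only [Set.mem_setOf_eq] at *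
        calc ∑ i : ι, ((r • v) i)^q * g i = r^q * ∑ i : ι, (v i)^q * g i := by
              rw [Finset.mul_sum]
              refine Finset.sum_congr rfl fun i _ => ?_
              simp only [Pi.smul_apply, smul_eq_mul, mul_pow]
              ring
          _ = 0 := by rw [hv, mul_zero] } with hK
  have hKmem : ∀ v : ι → R, v ∈ K ↔ ∑ i : ι, (v i)^q * g i = 0 := fun v => Iff.rfl
  haveI : IsNoetherian R R := isNoetherianRing_iff.mp ‹IsNoetherianRing R›
  obtain ⟨T, hT⟩ := IsNoetherian.noetherian K
  -- common denominator for the values of Θ on the generators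
  obtain ⟨u, hu⟩ := IsLocalization.exist_integer_multiples P.primeCompl Finset.univ
    (fun i : ι => Θ (f (g i)))
  choose v hv using fun i : ι => (hu i (Finset.mem_univ i))
  have hv' : ∀ i : ι, f (v i) = f (u : R) * Θ (f (g i)) := by
    intro i
    rw [← Algebra.smul_def]
    exact hv i
  -- key computation : Θ of an f-image
  have hΘf : ∀ (k : ι → R), ∑ i : ι, f (k i) * Θ (f (g i)) = Θ (f (∑ i : ι, (k i)^q * g i)) := by
    intro k
    rw [map_sum, map_sum]
    refine Finset.sum_congr rfl fun i _ => ?_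
    rw [map_mul, map_pow]
    exact (hΘ (f (k i)) (f (g i))).symm
  have hkey : ∀ k ∈ K, f (∑ i : ι, k i * v i) = 0 := by
    intro k hk
    have h1 : ∑ i : ι, f (k i) * f (v i) = f (u:R) * ∑ i : ι, f (k i) * Θ (f (g i)) := by
      rw [Finset.mul_sum]
      refine Finset.sum_congr rfl fun i _ => ?_
      rw [hv' i]; ring
    rw [map_sum]
    calc ∑ i : ι, f (k i * v i) = ∑ i : ι, f (k i) * f (v i) := by
          refine Finset.sum_congr rfl fun i _ => map_mul f _ _
      _ = f (u:R) * Θ (f (∑ i : ι, (k i)^q * g i)) := by rw [h1, hΘf k]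
      _ = 0 := by rw [(hKmem k).mp hk, map_zero, map_zero, mul_zero]
  -- clear denominators over the finitely many generators of K
  have hwk : ∀ k : {k // k ∈ T}, ∃ m : P.primeCompl, (m : R) * (∑ i : ι, (k : ι → R) i * v i) = 0 := by
    intro k
    have hkK : (k : ι → R) ∈ K := by
      rw [← hT]
      exact Submodule.subset_span k.2
    exact (IsLocalization.map_eq_zero_iff P.primeCompl RP _).mp (hkey _ hkK)
  choose wk hwk' using hwk
  set W : R := ∏ k ∈ T.attach, ((wk k : R)) with hW
  have hWmem : W ∈ P.primeCompl := Submonoid.prod_mem _ (fun k _ => (wk k).2)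
  -- the global relations hold against W * v
  have hWrel : ∀ k ∈ K, ∑ i : ι, k i * (W * v i) = 0 := by
    set φ : (ι → R) →ₗ[R] R :=
      { toFun := fun k => ∑ i : ι, k i * (W * v i)
        map_add' := by
          intro k₁ k₂
          simp only [Pi.add_apply, add_mul]
          rw [Finset.sum_add_distrib]
        map_smul' := by
          intro r k
          simp only [Pi.smul_apply, smul_eq_mul, RingHom.id_apply, Finset.mul_sum]
          refine Finset.sum_congr rfl fun i _ => ?_
          ring } with hφ
    have : K ≤ LinearMap.ker φ := by
      rw [← hT, Submodule.span_le]
      intro k hk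
      simp only [SetLike.mem_coe, LinearMap.mem_ker]
      obtain ⟨c, hc⟩ := Finset.dvd_prod_of_mem (fun k : {k // k ∈ T} => ((wk k : R)))
        (Finset.mem_attach T ⟨k, hk⟩)
      show ∑ i : ι, k i * (W * v i) = 0
      have heq : ∑ i : ι, k i * (W * v i) = c * ((wk ⟨k, hk⟩ : R) * ∑ i : ι, k i * v i) := by
        simp only [Finset.mul_sum]
        refine Finset.sum_congr rfl fun i _ => ?_
        rw [hW, hc]; ring
      rw [heq, hwk' ⟨k, hk⟩, mul_zero]
    intro k hk
    exact this hk
  -- decompositions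
  have hdec := hg
  set A : R → (ι → R) := fun x => (hdec x).choose with hA
  have hAx : ∀ x : R, x = ∑ i : ι, (A x i)^q * g i := fun x => (hdec x).choose_spec
  set val : R → R := fun x => ∑ i : ι, A x i * (W * v i) with hval
  have val_eq : ∀ (x : R) (aa : ι → R), x = ∑ i : ι, (aa i)^q * g i →
      val x = ∑ i : ι, aa i * (W * v i) := by
    intro x aa haa
    have hKd : (A x - aa) ∈ K := by
      rw [hKmem]
      have : ∀ i : ι, ((A x - aa) i)^q = (A x i)^q - (aa i)^q := by
        intro i
        simpa [hq] using sub_pow_char_pow (R := R) (A x i) (aa i) E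
      calc ∑ i : ι, ((A x - aa) i)^q * g i
          = ∑ i : ι, ((A x i)^q * g i - (aa i)^q * g i) := by
            refine Finset.sum_congr rfl fun i _ => ?_
            rw [this i, sub_mul]
        _ = x - x := by rw [Finset.sum_sub_distrib, ← hAx x, ← haa]
        _ = 0 := sub_self x
    have h0 := hWrel _ hKd
    have : ∑ i : ι, (A x i - aa i) * (W * v i) = 0 := by
      simpa using h0
    have hsplit : ∑ i : ι, (A x i) * (W * v i) - ∑ i : ι, aa i * (W * v i)
        = ∑ i : ι, (A x i - aa i) * (W * v i) := by
      rw [← Finset.sum_sub_distrib]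
      refine Finset.sum_congr rfl fun i _ => ?_
      ring
    have hfin := hsplit.trans this
    show ∑ i : ι, A x i * (W * v i) = ∑ i : ι, aa i * (W * v i)
    exact sub_eq_zero.mp hfin
  -- build the additive map
  have hadd : ∀ x y : R, val (x + y) = val x + val y := by
    intro x y
    have hdecxy : x + y = ∑ i : ι, ((A x + A y) i)^q * g i := by
      have : ∀ i : ι, ((A x + A y) i)^q = (A x i)^q + (A y i)^q := by
        intro i
        simpa [hq] using add_pow_char_pow (R := R) (A x i) (A y i) p E
      calc x + y = ∑ i : ι, (A x i)^q * g i + ∑ i : ι, (A y i)^q * g i := by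
            rw [← hAx x, ← hAx y]
        _ = ∑ i : ι, ((A x + A y) i)^q * g i := by
            rw [← Finset.sum_add_distrib]
            refine Finset.sum_congr rfl fun i _ => ?_
            rw [this i, add_mul]
    rw [val_eq _ _ hdecxy]
    rw [show val x = ∑ i : ι, A x i * (W * v i) from rfl,
      show val y = ∑ i : ι, A y i * (W * v i) from rfl]
    rw [← Finset.sum_add_distrib]
    refine Finset.sum_congr rfl fun i _ => ?_
    simp only [Pi.add_apply]
    ring
  set ψ : R →+ R := AddMonoidHom.mk' val hadd with hψdef
  have hψsemi : Semilin R q ψ := by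
    intro r x
    show val (r^q * x) = r * val x
    have hdecr : r^q * x = ∑ i : ι, ((r • A x) i)^q * g i := by
      calc r^q * x = r^q * ∑ i : ι, (A x i)^q * g i := by rw [← hAx x]
        _ = ∑ i : ι, ((r • A x) i)^q * g i := by
            rw [Finset.mul_sum]
            refine Finset.sum_congr rfl fun i _ => ?_
            simp only [Pi.smul_apply, smul_eq_mul, mul_pow]
            ring
    rw [val_eq _ _ hdecr]
    rw [show val x = ∑ i : ι, A x i * (W * v i) from rfl, Finset.mul_sum]
    refine Finset.sum_congr rfl fun i _ => ?_
    simp only [Pi.smul_apply, smul_eq_mul]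
    ring
  -- value at z
  have himg : ∀ x : R, f (val x) = f W * (f (u:R) * Θ (f x)) := by
    intro x
    rw [show val x = ∑ i : ι, A x i * (W * v i) from rfl, map_sum]
    calc ∑ i : ι, f (A x i * (W * v i))
        = f W * (f (u:R) * ∑ i : ι, f (A x i) * Θ (f (g i))) := by
          rw [Finset.mul_sum, Finset.mul_sum]
          refine Finset.sum_congr rfl fun i _ => ?_
          rw [map_mul, map_mul, hv' i]
          ring
      _ = f W * (f (u:R) * Θ (f x)) := by
          rw [hΘf (A x), ← hAx x]
  have hvz : f (val z) = f (W * (u:R)) := by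
    rw [himg z, hΘz, map_mul]
    ring
  have hfinal : val z ∉ P := by
    have h0 : f (val z - W * (u:R)) = 0 := by rw [map_sub, hvz, sub_self]
    obtain ⟨m, hm⟩ := (IsLocalization.map_eq_zero_iff P.primeCompl RP _).mp h0
    have hmm : (m:R) * val z = (m:R) * (W * (u:R)) := by
      have hms := hm
      rw [mul_sub] at hms
      exact sub_eq_zero.mp hms
    intro hvP
    have hmem : (m:R) * (W * (u:R)) ∈ P.primeCompl :=
      Submonoid.mul_mem _ m.2 (Submonoid.mul_mem _ hWmem u.2)
    exact hmem (hmm ▸ P.mul_mem_left (m:R) hvP)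
  exact ⟨ψ, hψsemi, hfinal⟩

/-- `Rcirc` is preserved by localization at a prime. -/
lemma rcirc_loc {R : Type u} [CommRing R] (P : Ideal R) [hP : P.IsPrime] {c : R}
    (hc : c ∈ Rcirc R) :
    algebraMap R (Localization.AtPrime P) c ∈ Rcirc (Localization.AtPrime P) := by
  intro Q' hQ' hmem
  set f := algebraMap R (Localization.AtPrime P) with hf
  have hQ'p : Q'.IsPrime := hQ'.1.1
  have hQP : Q'.comap f ≤ P := by
    intro x hx
    by_contra hxP
    have hunit : IsUnit (f x) :=
      (IsLocalization.AtPrime.isUnit_to_map_iff (Localization.AtPrime P) P x).mpr hxP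
    exact hQ'p.ne_top (Q'.eq_top_of_isUnit_mem hx hunit)
  haveI : (Q'.comap f).IsPrime := Ideal.IsPrime.comap f
  obtain ⟨Q₀, hQ₀min, hQ₀le⟩ :=
    Ideal.exists_minimalPrimes_le (bot_le : (⊥ : Ideal R) ≤ Q'.comap f)
  have hQ₀p : Q₀.IsPrime := hQ₀min.1.1
  have hdisj : Disjoint ((P.primeCompl : Submonoid R) : Set R) (Q₀ : Set R) := by
    rw [Set.disjoint_left]
    intro x hx hxQ
    exact hx (hQP (hQ₀le hxQ))
  have hmap_prime := IsLocalization.isPrime_of_isPrime_disjoint P.primeCompl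
    (Localization.AtPrime P) Q₀ hQ₀p hdisj
  have hle : Q₀.map f ≤ Q' := by
    have hmc := IsLocalization.map_comap P.primeCompl (Localization.AtPrime P) Q'
    calc Q₀.map f ≤ (Q'.comap f).map f := Ideal.map_mono hQ₀le
      _ = Q' := hmc
  have heq : Q₀.map f = Q' := le_antisymm hle (hQ'.2 ⟨hmap_prime, bot_le⟩ hle)
  have hcQ₀ : c ∈ Q₀ := by
    have hc' : f c ∈ Q₀.map f := heq ▸ hmem
    have := Ideal.mem_comap.mpr hc'
    rwa [show Ideal.comap f (Ideal.map f Q₀) = Q₀ from IsLocalization.comap_map_of_isPrime_disjoint P.primeCompl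
      (Localization.AtPrime P) hQ₀p hdisj] at this
  exact hc Q₀ hQ₀min hcQ₀

/-- Hard direction: below an F-pure-pair exponent, pairs are strongly F-regular. -/
lemma fpure_to_sfrp {R : Type u} [CommRing R] [IsNoetherianRing R] {p : ℕ} (hp : p.Prime)
    [CharP R p] (hFF : FFinite R p) (hFP : FPureRing R p) {a : Ideal R}
    (hloc : ∀ (P : Ideal R) (hP : P.IsPrime), ¬ a ≤ P →
      StronglyFRegularRing (Localization.AtPrime P (hp := hP)) p)
    {s t : ℝ} (ht : 0 ≤ t) (hts : t < s) (h : FPurePair R p a s) :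
    StronglyFRegularPair R p a t := by
  classical
  obtain ⟨e₀, hpair⟩ := h
  have hp1R : (1:ℝ) < (p:ℝ) := by exact_mod_cast hp.one_lt
  have hst : (0:ℝ) < s - t := by linarith
  obtain ⟨E₁, hE₁⟩ := pow_unbounded_of_one_lt (2/(s-t) + 1) hp1R
  set e' := max e₀ E₁ with he'
  have h2 : 2/(s-t) + 1 < (p:ℝ)^e' :=
    lt_of_lt_of_le hE₁ (pow_le_pow_right₀ hp1R.le (le_max_right _ _))
  obtain ⟨b, hb, θ, hθ, hθb⟩ := hpair e' (le_max_left _ _)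
  set Q : ℝ := (p:ℝ)^e' with hQdef
  set M' : ℕ := ⌊s * (Q - 1)⌋₊ with hM'
  have hgap : 2 < (s-t) * (Q - 1) := by
    have hd : 2/(s-t) < Q - 1 := by linarith
    have := (div_lt_iff₀ hst).mp hd
    linarith
  have hX0 : (0:ℝ) ≤ Q - 1 := by
    have : (1:ℝ) ≤ Q := by
      rw [hQdef]
      exact one_le_pow₀ hp1R.le
    linarith
  have hflo : s * (Q - 1) < (M':ℝ) + 1 := Nat.lt_floor_add_one _
  have hexp : s * (Q-1) = t * (Q-1) + (s-t) * (Q-1) := by ring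
  have htX : (0:ℝ) ≤ t * (Q - 1) := mul_nonneg ht hX0
  have hM'lb : t * (Q - 1) + 1 ≤ (M':ℝ) := by linarith
  have hM'0 : M' ≠ 0 := by
    have h1 : (1:ℝ) ≤ (M':ℝ) := by linarith
    have h1' : 1 ≤ M' := by exact_mod_cast h1
    omega
  intro c hc
  -- the chain of ideals
  set gens : ℕ → Set R := fun e =>
    {y | ∃ ψ : R →+ R, Semilin R (p^e) ψ ∧ ∃ (A : ℕ) (w : R), y = ψ (c * (b^A * w))}
    with hgensdef
  set L : ℕ → Ideal R := fun e => Ideal.span (gens e) with hLdef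
  have hmono : ∀ e, L e ≤ L (e+1) := by
    intro e
    apply Ideal.span_mono
    rintro y ⟨ψ, hψ, A, w, rfl⟩
    obtain ⟨θ₁, hθ₁, hθ₁1⟩ := hFP 1
    refine ⟨ψ.comp θ₁, ?_, A * p, c^(p-1) * w^p, ?_⟩
    · have := Semilin.comp (q₁ := p^1) (q₂ := p^e) hθ₁ hψ
      rwa [← pow_add] at this
    · have harg : c * (b^(A*p) * (c^(p-1) * w^p)) = (c * (b^A * w))^(p^1) * 1 := by
        rw [pow_one, mul_one, mul_pow, mul_pow, ← pow_mul]
        have hcp : c^p = c * c^(p-1) := by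
          rw [← pow_succ']
          congr 1
          have := hp.pos
          omega
        rw [hcp]; ring
      simp only [AddMonoidHom.comp_apply]
      rw [harg, hθ₁, hθ₁1, mul_one]
  have hmonoall : Monotone L := monotone_nat_of_le_succ hmono
  haveI : IsNoetherian R R := isNoetherianRing_iff.mp ‹IsNoetherianRing R›
  obtain ⟨ee, hstab⟩ := monotone_stabilizes_iff_noetherian.mpr ‹IsNoetherian R R›
    ⟨L, hmonoall⟩
  -- b is in the radical of the stable ideal
  have hbrad : b ∈ (L ee).radical := by
    rw [Ideal.radical_eq_sInf, Ideal.mem_sInf]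
    rintro J ⟨hLJ, hJp⟩
    by_contra hbJ
    haveI := hJp
    have hna : ¬ a ≤ J := by
      intro hle
      exact hbJ (hle (Ideal.pow_le_self hM'0 hb))
    have hSFR := hloc J hJp hna
    have hcloc := rcirc_loc J hc
    obtain ⟨e₂, hsplit⟩ := hSFR _ hcloc
    obtain ⟨ψ, hψ, hψc⟩ := transfer hp hFF J c e₂ hsplit
    obtain ⟨θ₂, hθ₂, hθ₂1⟩ := hFP ee
    have hgen : ψ c ∈ gens (e₂ + ee) := by
      refine ⟨ψ.comp θ₂, ?_, 0, c^(p^ee - 1), ?_⟩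
      · have := Semilin.comp (q₁ := p^ee) (q₂ := p^e₂) hθ₂ hψ
        rwa [← pow_add] at this
      · have harg : c * ((b:R)^0 * c^(p^ee - 1)) = c^(p^ee) * 1 := by
          rw [pow_zero, one_mul, mul_one, ← pow_succ']
          congr 1
          have : 1 ≤ p^ee := Nat.one_le_pow _ _ hp.pos
          omega
        simp only [AddMonoidHom.comp_apply]
        rw [harg, hθ₂, hθ₂1, mul_one]
    have hmem : ψ c ∈ L ee := by
      have h1 : ψ c ∈ L (e₂ + ee) := Ideal.subset_span hgen
      have h2 : L ee = L (e₂ + ee) := hstab (e₂ + ee) (Nat.le_add_left _ _)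
      rwa [← h2] at h1
    exact hψc (hLJ hmem)
  obtain ⟨κ, hκ⟩ := Ideal.mem_radical_iff.mp hbrad
  -- extract a single map at level ee
  have hκ' : b^κ ∈ Submodule.span R (gens ee) := hκ
  obtain ⟨Ψ, hΨ, hΨc⟩ : ∃ Ψ : R →+ R, Semilin R (p^ee) Ψ ∧ Ψ c = b^κ := by
    refine Submodule.span_induction
      (p := fun x _ => ∃ Ψ : R →+ R, Semilin R (p^ee) Ψ ∧ Ψ c = x) ?_ ?_ ?_ ?_ hκ'
    · rintro y ⟨ψ, hψ, A, w, rfl⟩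
      refine ⟨ψ.comp (AddMonoidHom.mulLeft (b^A * w)), hψ.premul _, ?_⟩
      show ψ ((b^A*w) * c) = ψ (c * (b^A * w))
      rw [mul_comm]
    · exact ⟨0, fun r x => by simp, by simp⟩
    · rintro x y _ _ ⟨Ψ₁, h₁, hc₁⟩ ⟨Ψ₂, h₂, hc₂⟩
      refine ⟨Ψ₁ + Ψ₂, fun r x' => ?_, by simp [hc₁, hc₂]⟩
      simp only [AddMonoidHom.add_apply, h₁ r x', h₂ r x', mul_add]
    · rintro r x _ ⟨Ψ, h₁, hc₁⟩
      refine ⟨(AddMonoidHom.mulLeft r).comp Ψ, h₁.postmul r, ?_⟩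
      show r * Ψ c = r • x
      rw [hc₁, smul_eq_mul]
  -- iterated pair splittings
  set q' := p^e' with hq'
  set σ : ℕ → ℕ := fun j => ∑ i ∈ Finset.range j, q'^i with hσ
  have hiter : ∀ j : ℕ, ∃ Θ : R →+ R, Semilin R (q'^j) Θ ∧
      ∀ x : R, Θ (b^(σ j) * x^(q'^j)) = x := by
    intro j
    induction j with
    | zero =>
      refine ⟨AddMonoidHom.id R, fun r x => ?_, fun x => ?_⟩
      · simp
      · simp [hσ]
    | succ j ih =>
      obtain ⟨Θ, hΘ, hΘp⟩ := ih
      refine ⟨Θ.comp θ, ?_, fun x => ?_⟩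
      · have := Semilin.comp (q₁ := p^e') (q₂ := q'^j) hθ hΘ
        rwa [← hq', ← pow_succ] at this
      · have hσs : σ (j+1) = σ j * q' + 1 := by
          simp only [hσ, geom_sum_succ]
          ring
        have harg : b^(σ (j+1)) * x^(q'^(j+1)) = (b^(σ j) * x^(q'^j))^(q') * b := by
          have h1 : q'^(j+1) = q'^j * q' := pow_succ q' j
          rw [hσs, h1, pow_add, pow_one, mul_pow, pow_mul, pow_mul]
          ring
        simp only [AddMonoidHom.comp_apply]
        have hstep : θ ((b^(σ j) * x^(q'^j))^(q') * b) = (b^(σ j) * x^(q'^j)) * θ b := by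
          rw [hq']
          exact hθ _ _
        rw [harg, hstep, hθb, mul_one, hΘp]
  set j := M' * κ + ⌈t⌉₊ + κ + 1 with hj
  obtain ⟨Θj, hΘj, hΘjp⟩ := hiter j
  have hσge : ∀ n : ℕ, n ≤ σ n := by
    intro n
    calc n = ∑ i ∈ Finset.range n, 1 := by simp
      _ ≤ σ n := Finset.sum_le_sum fun i _ => Nat.one_le_pow _ _ (pow_pos hp.pos e')
  have hκj : κ ≤ j := by
    rw [hj]
    exact le_trans (Nat.le_add_left κ _) (Nat.le_succ _)
  have hκσ : κ ≤ σ j := le_trans hκj (hσge j)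
  -- real arithmetic
  have hSig : ((σ j : ℕ) : ℝ) = ∑ i ∈ Finset.range j, Q^i := by
    rw [hσ]
    push_cast [hq', hQdef]
    rfl
  have hgeo : ((σ j : ℕ) : ℝ) * (Q - 1) = Q^j - 1 := by
    rw [hSig]
    exact geom_sum_mul Q j
  have hSigge : (M':ℝ) * (κ:ℝ) + t + 1 ≤ ((σ j : ℕ) : ℝ) := by
    have h1 : (j:ℝ) ≤ ((σ j : ℕ):ℝ) := by exact_mod_cast hσge j
    have h2 : (j:ℝ) = (M':ℝ)*(κ:ℝ) + ((⌈t⌉₊ : ℕ):ℝ) + (κ:ℝ) + 1 := by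
      rw [hj]; push_cast; ring
    have h3 : t ≤ ((⌈t⌉₊ : ℕ):ℝ) := Nat.le_ceil t
    have h4 : (0:ℝ) ≤ (κ:ℝ) := Nat.cast_nonneg κ
    linarith
  have hσκ : (0:ℝ) ≤ ((σ j : ℕ):ℝ) - (κ:ℝ) := by
    have : (κ:ℝ) ≤ ((σ j : ℕ):ℝ) := by exact_mod_cast hκσ
    linarith
  have hQj : t * Q^j ≤ (M':ℝ) * (((σ j : ℕ):ℝ) - (κ:ℝ)) := by
    have e0 : Q^j = ((σ j : ℕ):ℝ) * (Q-1) + 1 := by linarith [hgeo]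
    have e1 : t * Q^j = t * (((σ j : ℕ):ℝ)*(Q-1)) + t := by rw [e0]; ring
    have e2 : (t*(Q-1)+1) * (((σ j : ℕ):ℝ) - (κ:ℝ)) ≤ (M':ℝ) * (((σ j : ℕ):ℝ) - (κ:ℝ)) :=
      mul_le_mul_of_nonneg_right hM'lb hσκ
    have e3 : (t*(Q-1)+1) * (((σ j : ℕ):ℝ) - (κ:ℝ))
        = t * (((σ j : ℕ):ℝ)*(Q-1)) + ((σ j : ℕ):ℝ) - (κ:ℝ)*(t*(Q-1)+1) := by ring
    have e4 : (κ:ℝ)*(t*(Q-1)+1) ≤ (κ:ℝ)*(M':ℝ) :=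
      mul_le_mul_of_nonneg_left hM'lb (Nat.cast_nonneg κ)
    nlinarith [hSigge]
  set Ef := ee + e' * j with hEf
  set m := (σ j - κ) * p^ee with hm
  refine ⟨Ef, b^m, ?_, ?_⟩
  · have h1 : b^m ∈ a^(M' * m) := by
      rw [pow_mul]
      exact Ideal.pow_mem_pow hb m
    refine Ideal.pow_le_pow_right (Nat.ceil_le.mpr ?_) h1
    have hc1 : ((M' * m : ℕ):ℝ) = (M':ℝ) * ((((σ j : ℕ):ℝ) - (κ:ℝ)) * (p:ℝ)^ee) := by
      rw [hm]
      push_cast [Nat.cast_sub hκσ]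
      ring
    have hc2 : t * (p:ℝ)^Ef = (t * Q^j) * (p:ℝ)^ee := by
      rw [hEf, pow_add, pow_mul, ← hQdef]
      ring
    rw [hc2, hc1]
    have hpee : (0:ℝ) ≤ (p:ℝ)^ee := by positivity
    calc (t * Q^j) * (p:ℝ)^ee ≤ ((M':ℝ) * (((σ j : ℕ):ℝ) - (κ:ℝ))) * (p:ℝ)^ee :=
          mul_le_mul_of_nonneg_right hQj hpee
      _ = (M':ℝ) * ((((σ j : ℕ):ℝ) - (κ:ℝ)) * (p:ℝ)^ee) := by ring
  · refine ⟨Θj.comp Ψ, ?_, ?_⟩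
    · have := Semilin.comp (q₁ := p^ee) (q₂ := q'^j) hΨ hΘj
      have hlev : q'^j * p^ee = p^Ef := by
        rw [hq', ← pow_mul, ← pow_add, hEf]
        congr 1
        omega
      rwa [hlev] at this
    · simp only [AddMonoidHom.comp_apply]
      have harg : c * b^m = (b^(σ j - κ))^(p^ee) * c := by
        rw [← pow_mul, ← hm, mul_comm]
      have hval2 : Ψ ((b^(σ j - κ))^(p^ee) * c) = b^(σ j) := by
        rw [hΨ, hΨc, ← pow_add, Nat.sub_add_cancel hκσ]
      rw [harg, hval2]
      have := hΘjp 1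
      rwa [one_pow, mul_one] at this

end FptTW

/-- if `R_P` is strongly F-regular for every prime `P` not containing `a`,
then `c(a)` equals the supremum of all `s ≥ 0` with `(R, aˢ)` strongly F-regular. -/
theorem stmt4 (R : Type*) [CommRing R] [IsNoetherianRing R] [IsReduced R]
    (p : ℕ) (hp : p.Prime) [CharP R p] (hFF : FFinite R p) (hFP : FPureRing R p)
    (a : Ideal R) (ha : ((a : Set R) ∩ Rcirc R).Nonempty)
    (hloc : ∀ (P : Ideal R) (hP : P.IsPrime), ¬ a ≤ P →
      StronglyFRegularRing (Localization.AtPrime P (hp := hP)) p) :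
    fpt R p a = sSup {s : ℝ | 0 ≤ s ∧ StronglyFRegularPair R p a s} := by
  classical
  set S₁ := {s : ℝ | 0 ≤ s ∧ FPurePair R p a s} with hS₁
  set S₂ := {s : ℝ | 0 ≤ s ∧ StronglyFRegularPair R p a s} with hS₂
  have hsub : S₂ ⊆ S₁ := fun s hs => ⟨hs.1, FptTW.sfrp_to_fpure hp hFP ha hs.1 hs.2⟩
  have hint : ∀ s ∈ S₁, ∀ t : ℝ, 0 ≤ t → t < s → t ∈ S₂ := fun s hs t ht hts =>
    ⟨ht, FptTW.fpure_to_sfrp hp hFF hFP hloc ht hts hs.2⟩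
  have h0 : (0:ℝ) ∈ S₁ := by
    refine ⟨le_refl 0, 0, fun e _ => ⟨1, ?_, hFP e⟩⟩
    simp
  have hne₁ : S₁.Nonempty := ⟨0, h0⟩
  show sSup S₁ = sSup S₂
  have hS₂0 : 0 ≤ sSup S₂ := by
    rcases S₂.eq_empty_or_nonempty with hemp | ⟨x, hx⟩
    · rw [hemp, Real.sSup_empty]
    · by_cases hbdd : BddAbove S₂
      · exact le_trans hx.1 (le_csSup hbdd hx)
      · rw [Real.sSup_of_not_bddAbove hbdd]
  by_cases hbdd : BddAbove S₁
  · have hbdd₂ : BddAbove S₂ := hbdd.mono hsub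
    apply le_antisymm
    · apply csSup_le hne₁
      intro s hs
      by_contra hlt
      push_neg at hlt
      set u := (sSup S₂ + s)/2 with hu
      have hu0 : 0 ≤ u := by rw [hu]; linarith
      have hus : u < s := by rw [hu]; linarith
      have huS : sSup S₂ < u := by rw [hu]; linarith
      exact absurd (le_csSup hbdd₂ (hint s hs u hu0 hus)) (not_le.mpr huS)
    · rcases S₂.eq_empty_or_nonempty with hemp | hne₂
      · rw [hemp, Real.sSup_empty]
        exact le_csSup hbdd h0
      · exact csSup_le_csSup hbdd hne₂ hsub
  · rw [Real.sSup_of_not_bddAbove hbdd]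
    have hbdd₂ : ¬ BddAbove S₂ := by
      rintro ⟨X, hX⟩
      obtain ⟨s, hsS, hs⟩ := not_bddAbove_iff.mp hbdd (max X 0 + 1)
      have hmem : (max X 0 + 1) ∈ S₂ := hint s hsS _ (by positivity) hs
      have h1 : max X 0 + 1 ≤ X := hX hmem
      have h2 : X ≤ max X 0 := le_max_left _ _
      linarith
    rw [Real.sSup_of_not_bddAbove hbdd₂]
end

section
/- Let R be an F-finite F-pure reduced ring of characteristic p > 0 and a ⊆ R an ideal with a ∩ R° ≠ ∅. Then c(a) = c(ā), where ā denotes the integral closure of a. -/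
/-- The integral closure of an ideal `a`: the set of `x ∈ R` satisfying an equation
`x ^ n + a₁ * x ^ (n-1) + ⋯ + aₙ = 0` for some `n ≥ 1` with `aᵢ ∈ a ^ i`. -/
def idealIntegralClosure {R : Type*} [CommRing R] (a : Ideal R) : Set R :=
  {x : R | ∃ n : ℕ, 0 < n ∧ ∃ c : ℕ → R, (∀ i, 1 ≤ i → i ≤ n → c i ∈ a ^ i) ∧
    x ^ n + ∑ i ∈ Finset.Icc 1 n, c i * x ^ (n - i) = 0}


open Pointwise in
private lemma prodMemPowCard {R : Type*} [CommRing R] (I : Ideal R) {ι : Type*}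
    [DecidableEq ι] (t : Finset ι) (g : ι → R) (h : ∀ i ∈ t, g i ∈ I) :
    ∏ i ∈ t, g i ∈ I ^ t.card := by
  induction t using Finset.induction_on with
  | empty => simp
  | @insert x t' hx ih =>
    rw [Finset.prod_insert hx, Finset.card_insert_of_notMem hx, pow_succ']
    exact Ideal.mul_mem_mul (h x (Finset.mem_insert_self _ _))
      (ih fun i hi => h i (Finset.mem_insert_of_mem hi))

private lemma selfSubClosure {R : Type*} [CommRing R] (a : Ideal R) :
    (a : Set R) ⊆ idealIntegralClosure a := by
  intro x hx
  refine ⟨1, one_pos, fun _ => -x, fun i h1 h2 => ?_, by simp⟩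
  have : i = 1 := le_antisymm h2 h1
  subst this
  simpa using a.neg_mem hx

private lemma integralPowMem {R : Type*} [CommRing R] {a I : Ideal R} (haI : a ≤ I)
    {x : R} (hx : x ∈ idealIntegralClosure a) (hxI : x ∈ I) :
    ∃ n : ℕ, 1 ≤ n ∧ x ^ n ∈ a * I ^ (n - 1) := by
  obtain ⟨n, hn, c, hc, heq⟩ := hx
  refine ⟨n, hn, ?_⟩
  have hx' : x ^ n = -∑ i ∈ Finset.Icc 1 n, c i * x ^ (n - i) := by
    rw [eq_neg_iff_add_eq_zero]; exact heq
  rw [hx']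
  refine neg_mem (Ideal.sum_mem _ fun i hi => ?_)
  obtain ⟨h1, h2⟩ := Finset.mem_Icc.mp hi
  have hci : c i ∈ a * I ^ (i - 1) := by
    have hle : a ^ i ≤ a * I ^ (i - 1) := by
      calc a ^ i = a * a ^ (i - 1) := by rw [← pow_succ']; congr 1; omega
        _ ≤ a * I ^ (i - 1) := Ideal.mul_mono_right (Ideal.pow_right_mono haI _)
    exact hle (hc i h1 h2)
  have hmem : c i * x ^ (n - i) ∈ (a * I ^ (i - 1)) * I ^ (n - i) :=
    Ideal.mul_mem_mul hci (Ideal.pow_mem_pow hxI _)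
  have heq2 : (a * I ^ (i - 1)) * I ^ (n - i) = a * I ^ (n - 1) := by
    rw [mul_assoc, ← pow_add]; congr 2; omega
  rwa [heq2] at hmem

open Pointwise in
private lemma stepLemma {R : Type*} [CommRing R] (a : Ideal R) (s : Finset R)
    (n : R → ℕ) (hn1 : ∀ y ∈ s, 1 ≤ n y)
    (hn2 : ∀ y ∈ s, y ^ n y ∈ a * (Ideal.span (s : Set R)) ^ (n y - 1))
    (hsI : ∀ y ∈ s, y ∈ Ideal.span (s : Set R))
    {M : ℕ} (hM : ∑ y ∈ s, (n y - 1) < M) :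
    Ideal.span (s : Set R) ^ M ≤ a * Ideal.span (s : Set R) ^ (M - 1) := by
  classical
  set I : Ideal R := Ideal.span (s : Set R) with hI
  have hpow : Ideal.span (s : Set R) ^ M = Ideal.span ((s : Set R) ^ M) :=
    Submodule.span_pow _ _
  rw [hI, hpow, Ideal.span_le]
  intro x hx
  rw [Set.mem_pow] at hx
  obtain ⟨f, hf⟩ := hx
  rw [List.prod_ofFn] at hf
  set g : Fin M → R := fun i => (f i : R) with hg
  have hgs : ∀ i : Fin M, g i ∈ s := fun i => (f i).2
  have hcard : ∑ y ∈ s, (Finset.univ.filter (fun i => g i = y)).card = M := by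
    rw [← Finset.card_eq_sum_card_fiberwise (fun i _ => hgs i)]
    simp
  obtain ⟨y, hy, hlt⟩ : ∃ y ∈ s, n y - 1 < (Finset.univ.filter (fun i => g i = y)).card := by
    apply Finset.exists_lt_of_sum_lt
    rw [hcard]; exact hM
  set F := Finset.univ.filter (fun i => g i = y) with hF
  set c := F.card with hc
  have hnc : n y ≤ c := by have := hn1 y hy; omega
  have hcM : c ≤ M := by
    calc c ≤ Finset.univ.card := Finset.card_filter_le _ _
      _ = M := by simp
  have hsplit : x = (∏ i ∈ F, g i) * ∏ i ∈ Finset.univ.filter (fun i => ¬ g i = y), g i := by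
    rw [Finset.prod_filter_mul_prod_filter_not, hf]
  have hprodF : ∏ i ∈ F, g i = y ^ c := by
    rw [Finset.prod_congr rfl (fun i hi => (Finset.mem_filter.mp hi).2), Finset.prod_const]
  have hcardnot : (Finset.univ.filter (fun i => ¬ g i = y)).card = M - c := by
    have := Finset.card_filter_add_card_filter_not
      (s := (Finset.univ : Finset (Fin M))) (p := fun i => g i = y)
    simp only [Finset.card_univ, Fintype.card_fin] at this
    rw [← hF] at this
    omega
  have hrest : ∏ i ∈ Finset.univ.filter (fun i => ¬ g i = y), g i ∈ I ^ (M - c) := by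
    rw [← hcardnot]
    exact prodMemPowCard I _ g fun i hi => hsI _ (hgs i)
  set r := ∏ i ∈ Finset.univ.filter (fun i => ¬ g i = y), g i with hr
  have hxe : x = y ^ n y * (y ^ (c - n y) * r) := by
    rw [hsplit, hprodF, ← mul_assoc, ← pow_add]
    congr 2
    omega
  have hxmem : x ∈ (a * I ^ (n y - 1)) * (I ^ (c - n y) * I ^ (M - c)) := by
    rw [hxe]
    exact Ideal.mul_mem_mul (hn2 y hy)
      (Ideal.mul_mem_mul (Ideal.pow_mem_pow (hsI y hy) _) hrest)
  have heq : (a * I ^ (n y - 1)) * (I ^ (c - n y) * I ^ (M - c)) = a * I ^ (M - 1) := by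
    rw [mul_assoc, ← pow_add, ← pow_add]
    congr 2
    have := hn1 y hy
    omega
  rwa [heq] at hxmem

private lemma powLeOfIntegral {R : Type*} [CommRing R] [IsNoetherianRing R] (a : Ideal R) :
    ∃ n₀ : ℕ, ∀ m : ℕ, (Ideal.span (idealIntegralClosure a)) ^ (m + n₀) ≤ a ^ m := by
  classical
  set I : Ideal R := Ideal.span (idealIntegralClosure a) with hI
  have haI : a ≤ I := fun x hx => Ideal.subset_span (selfSubClosure a hx)
  obtain ⟨T, hTspan⟩ := IsNoetherian.noetherian I
  have hex : ∀ y : R, y ∈ T → ∃ u : Finset R,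
      ↑u ⊆ idealIntegralClosure a ∧ y ∈ Ideal.span (u : Set R) := by
    intro y hy
    have hyI : y ∈ Submodule.span R (idealIntegralClosure a) := by
      have : y ∈ I := hTspan ▸ Submodule.subset_span (by exact_mod_cast hy : y ∈ (T : Set R))
      exact this
    obtain ⟨u, hu1, hu2⟩ := Submodule.mem_span_finite_of_mem_span hyI
    exact ⟨u, hu1, hu2⟩
  choose! U hU1 hU2 using hex
  set s : Finset R := T.biUnion U with hs
  have hs_sub : (s : Set R) ⊆ idealIntegralClosure a := by
    intro x hx
    simp only [hs, Finset.coe_biUnion, Set.mem_iUnion, Finset.mem_coe] at hx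
    obtain ⟨y, hy, hxy⟩ := hx
    exact hU1 y hy hxy
  have hs_span : Ideal.span (s : Set R) = I := by
    refine le_antisymm (Ideal.span_le.mpr (fun x hx => Ideal.subset_span (hs_sub hx))) ?_
    rw [← hTspan]
    refine Submodule.span_le.mpr (fun y hy => ?_)
    have hy' : y ∈ T := by exact_mod_cast hy
    refine Ideal.span_mono ?_ (hU2 y hy')
    exact_mod_cast Finset.coe_subset.mpr (Finset.subset_biUnion_of_mem U hy')
  have hsI : ∀ y ∈ s, y ∈ Ideal.span (s : Set R) :=
    fun y hy => Ideal.subset_span (by exact_mod_cast hy)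
  have haI' : a ≤ Ideal.span (s : Set R) := hs_span ▸ haI
  have hint : ∀ y : R, y ∈ s → ∃ n : ℕ, 1 ≤ n ∧
      y ^ n ∈ a * Ideal.span (s : Set R) ^ (n - 1) :=
    fun y hy => integralPowMem haI' (hs_sub hy) (hsI y hy)
  choose! n hn1 hn2 using hint
  set N : ℕ := ∑ y ∈ s, (n y - 1) with hN
  have hstep : ∀ M : ℕ, N < M →
      Ideal.span (s : Set R) ^ M ≤ a * Ideal.span (s : Set R) ^ (M - 1) :=
    fun M hM => stepLemma a s n hn1 hn2 hsI hM
  refine ⟨N + 1, fun m => ?_⟩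
  rw [← hs_span]
  induction m with
  | zero => rw [pow_zero, Ideal.one_eq_top]; exact le_top
  | succ m ih =>
    have h1 : Ideal.span (s : Set R) ^ (m + 1 + (N + 1)) ≤
        a * Ideal.span (s : Set R) ^ (m + 1 + (N + 1) - 1) := hstep _ (by omega)
    have h2 : m + 1 + (N + 1) - 1 = m + (N + 1) := by omega
    calc Ideal.span (s : Set R) ^ (m + 1 + (N + 1))
        ≤ a * Ideal.span (s : Set R) ^ (m + (N + 1)) := by rw [← h2]; exact h1
      _ ≤ a * a ^ m := Ideal.mul_mono_right ih
      _ = a ^ (m + 1) := (pow_succ' a m).symm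

private lemma sSupAux (S T : Set ℝ) (h0 : (0 : ℝ) ∈ S) (hST : S ⊆ T)
    (hkey : ∀ t ∈ T, ∀ s : ℝ, 0 ≤ s → s < t → s ∈ S) : sSup S = sSup T := by
  by_cases hT : BddAbove T
  · have hS : BddAbove S := hT.mono hST
    refine le_antisymm (csSup_le_csSup hT ⟨0, h0⟩ hST) (csSup_le ⟨0, hST h0⟩ fun t ht => ?_)
    by_contra hlt
    push_neg at hlt
    have h0u : (0 : ℝ) ≤ sSup S := le_csSup hS h0
    set u := sSup S with hu
    have hs' : (u + t) / 2 ∈ S := by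
      refine hkey t ht _ (by linarith) (by linarith)
    have := le_csSup hS hs'
    linarith
  · have hS : ¬ BddAbove S := by
      rintro ⟨b, hb⟩
      apply hT
      refine ⟨max b 0 + 1, fun t ht => ?_⟩
      by_contra hgt
      push_neg at hgt
      have hmem : max b 0 + 1 ∈ S := hkey t ht _ (by positivity) hgt
      have := hb hmem
      have := le_max_left b 0
      linarith
    rw [csSup_of_not_bddAbove hT, csSup_of_not_bddAbove hS]

/-- `c(a) = c(ā)` where `ā` is the integral closure of `a`. -/
theorem stmt5 (R : Type*) [CommRing R] [IsNoetherianRing R] [IsReduced R]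
    (p : ℕ) (hp : p.Prime) [CharP R p] (hFF : FFinite R p) (hFP : FPureRing R p)
    (a : Ideal R) (ha : ((a : Set R) ∩ Rcirc R).Nonempty) :
    fpt R p a = fpt R p (Ideal.span (idealIntegralClosure a)) := by
  classical
  have haI : a ≤ Ideal.span (idealIntegralClosure a) :=
    fun x hx => Ideal.subset_span (selfSubClosure a hx)
  obtain ⟨n₀, hn₀⟩ := powLeOfIntegral a
  refine sSupAux _ _ ?_ ?_ ?_
  · exact ⟨le_refl 0, 0, fun e _ => ⟨1, by simp, hFP e⟩⟩
  · rintro s ⟨hs0, e₀, h⟩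
    refine ⟨hs0, e₀, fun e he => ?_⟩
    obtain ⟨d, hd, hsp⟩ := h e he
    exact ⟨d, Ideal.pow_right_mono haI _ hd, hsp⟩
  · rintro t ⟨ht0, e₀, hT⟩ s hs0 hst
    refine ⟨hs0, ?_⟩
    have hp1 : (1 : ℝ) < (p : ℝ) := by exact_mod_cast hp.one_lt
    obtain ⟨e₁, he₁⟩ := pow_unbounded_of_one_lt (((n₀ : ℝ) + 1) / (t - s) + 1) hp1
    refine ⟨max e₀ e₁, fun e he => ?_⟩
    obtain ⟨d, hd, hsp⟩ := hT e (le_trans (le_max_left _ _) he)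
    refine ⟨d, ?_, hsp⟩
    have hts : 0 < t - s := sub_pos.mpr hst
    have hq : ((n₀ : ℝ) + 1) / (t - s) + 1 < (p : ℝ) ^ e :=
      lt_of_lt_of_le he₁ (pow_le_pow_right₀ hp1.le (le_trans (le_max_right _ _) he))
    set x : ℝ := (p : ℝ) ^ e - 1 with hx
    have hx0 : 0 ≤ x := by
      have h1e : (1 : ℝ) ≤ (p : ℝ) ^ e := one_le_pow₀ hp1.le
      simp only [hx]
      linarith
    have hdiff : (n₀ : ℝ) + 1 ≤ (t - s) * x := by
      have h2 : ((n₀ : ℝ) + 1) / (t - s) < x := by simp only [hx]; linarith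
      have h3 : ((n₀ : ℝ) + 1) / (t - s) * (t - s) = (n₀ : ℝ) + 1 := by field_simp
      nlinarith
    have hfloor : ⌊s * x⌋₊ + (n₀ + 1) ≤ ⌊t * x⌋₊ := by
      have h3 : s * x + ((n₀ + 1 : ℕ) : ℝ) ≤ t * x := by push_cast; nlinarith
      calc ⌊s * x⌋₊ + (n₀ + 1) = ⌊s * x + ((n₀ + 1 : ℕ) : ℝ)⌋₊ :=
            (Nat.floor_add_natCast (mul_nonneg hs0 hx0) _).symm
        _ ≤ ⌊t * x⌋₊ := Nat.floor_le_floor h3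
    have hle : Ideal.span (idealIntegralClosure a) ^ ⌊t * x⌋₊ ≤ a ^ ⌊s * x⌋₊ :=
      le_trans (Ideal.pow_le_pow_right (by omega)) (hn₀ ⌊s * x⌋₊)
    exact hle hd
end

section
/- Let (R, m) be an F-finite F-pure reduced local ring of characteristic p > 0 with infinite residue field R/m, and let I ⊊ R be a proper ideal of positive height. Let J ⊆ I be a reduction of I (i.e., there exists an integer s > 0 with I^{n+s} = J^n I^s for every integer n ≥ 0) which is generated by λ elements. If c(I) > λ − r for an integer r ≥ 1, then I^r ⊆ J. -/
/-- Pigeonhole: if an ideal is spanned by a finset `T`, then its `(|T| q + 1)`-th power lies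
in the ideal generated by `q`-th powers of the elements of `T`. -/
lemma span_pow_le_span_pow_image (R : Type*) [CommRing R] (T : Finset R) (q : ℕ) :
    Ideal.span (T : Set R) ^ (T.card * q + 1) ≤
      Ideal.span ((fun y => y ^ q) '' (T : Set R)) := by
  classical
  induction T using Finset.induction_on with
  | empty => simp
  | @insert a T ha ih =>
    rw [Finset.coe_insert, Ideal.span_insert, Finset.card_insert_of_notMem ha]
    have h1 : (T.card + 1) * q + 1 = q + (T.card * q + 1) := by ring
    rw [h1]
    refine le_trans Ideal.sup_pow_add_le_pow_sup_pow (sup_le ?_ ?_)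
    · rw [Ideal.span_singleton_pow]
      refine Ideal.span_le.2 ?_
      intro z hz
      simp only [Set.mem_singleton_iff] at hz
      subst hz
      exact Ideal.subset_span ⟨a, by simp⟩
    · refine le_trans ih (Ideal.span_mono ?_)
      exact Set.image_mono (by simp)

/-- if `J ⊆ I` is a reduction of `I` generated by `λ` elements and
`c(I) > λ - r` for an integer `r ≥ 1`, then `I ^ r ⊆ J`. -/
theorem stmt7 (R : Type*) [CommRing R] [IsNoetherianRing R] [IsReduced R] [IsLocalRing R]
    (p : ℕ) (hp : p.Prime) [CharP R p] (hFF : FFinite R p) (hFP : FPureRing R p)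
    [Infinite (IsLocalRing.ResidueField R)]
    (I : Ideal R) (hI : I ≠ ⊤) (hht : 0 < idealHeight I)
    (J : Ideal R) (hJI : J ≤ I)
    (hred : ∃ s : ℕ, 0 < s ∧ ∀ n : ℕ, I ^ (n + s) = J ^ n * I ^ s)
    (lam : ℕ) (hgen : ∃ T : Finset R, T.card = lam ∧ Ideal.span (T : Set R) = J)
    (r : ℕ) (hr : 1 ≤ r) (hfpt : (lam : ℝ) - r < fpt R p I) :
    I ^ r ≤ J := by
    classical
  obtain ⟨s, hs, hredn⟩ := hred
  obtain ⟨T, hTcard, hTspan⟩ := hgen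
  -- the set defining fpt
  set S : Set ℝ := {t : ℝ | 0 ≤ t ∧ FPurePair R p I t} with hS
  have h0S : (0 : ℝ) ∈ S := by
    refine ⟨le_refl 0, 0, fun e _ => ⟨1, ?_, hFP e⟩⟩
    simp
  -- get t ∈ S with lam - r < t
  obtain ⟨t, htS, hlt⟩ : ∃ t ∈ S, (lam : ℝ) - r < t := by
    by_cases hb : BddAbove S
    · exact exists_lt_of_lt_csSup ⟨0, h0S⟩ hfpt
    · obtain ⟨t, htS, h⟩ := not_bddAbove_iff.1 hb ((lam : ℝ) - r)
      exact ⟨t, htS, h⟩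
  obtain ⟨ht0, e₀, hFPt⟩ := htS
  set ε : ℝ := t - ((lam : ℝ) - r) with hε
  have hεpos : 0 < ε := by simp [hε]; linarith
  -- choose e large
  have hp1 : (1 : ℝ) < (p : ℝ) := by exact_mod_cast hp.one_lt
  obtain ⟨n, hn⟩ := pow_unbounded_of_one_lt (((lam : ℝ) + s + 2) / ε + 1) hp1
  set e : ℕ := max e₀ n with he
  have hqn : (p : ℝ) ^ n ≤ (p : ℝ) ^ e :=
    pow_le_pow_right₀ hp1.le (le_max_right _ _)
  have hkey : (lam : ℝ) + s + 2 ≤ ε * ((p : ℝ) ^ e - 1) := by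
    have h2 : ((lam : ℝ) + s + 2) / ε ≤ (p : ℝ) ^ e - 1 := by
      linarith [le_trans hn.le hqn]
    rw [mul_comm]
    exact (div_le_iff₀ hεpos).1 h2
  obtain ⟨d, hd, ψ, hψ, hψd⟩ := hFPt e (le_max_left _ _)
  set q : ℕ := p ^ e with hq
  set N : ℕ := ⌊t * ((p : ℝ) ^ e - 1)⌋₊ with hN
  have hq1 : (1 : ℝ) ≤ (p : ℝ) ^ e := one_le_pow₀ hp1.le
  -- key numeric inequality
  have hnum : lam * q + s + 1 ≤ r * q + N := by
    have hNlb : t * ((p : ℝ) ^ e - 1) - 1 < (N : ℝ) := Nat.sub_one_lt_floor _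
    have hr' : (1 : ℝ) ≤ (r : ℝ) := by exact_mod_cast hr
    have : ((lam * q + s + 1 : ℕ) : ℝ) < ((r * q + N : ℕ) : ℝ) := by
      push_cast [hq]
      nlinarith
    exact_mod_cast this.le
  -- x^q * d lands in the ideal generated by q-th powers of generators of J
  intro x hx
  have hmem : x ^ q * d ∈ Ideal.span ((fun y => y ^ q) '' (T : Set R)) := by
    have h1 : x ^ q * d ∈ I ^ (r * q + N) := by
      rw [pow_add, pow_mul]
      exact Ideal.mul_mem_mul (Ideal.pow_mem_pow hx q) hd
    have h2 : I ^ (r * q + N) ≤ I ^ (lam * q + 1 + s) := by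
      apply Ideal.pow_le_pow_right
      omega
    have h3 : I ^ (lam * q + 1 + s) ≤ J ^ (lam * q + 1) := by
      rw [hredn (lam * q + 1)]
      exact Ideal.mul_le_left
    have h4 : J ^ (lam * q + 1) ≤ Ideal.span ((fun y => y ^ q) '' (T : Set R)) := by
      rw [← hTspan, ← hTcard]
      exact span_pow_le_span_pow_image R T q
    exact h4 (h3 (h2 (h1)))
  -- apply the splitting ψ
  have hx' : x = ψ (x ^ q * d) := by rw [hψ x d, hψd, mul_one]
  rw [hx']
  rw [show ((fun y => y ^ q) '' (T : Set R)) = ((T.image (fun y => y ^ q) : Finset R) : Set R)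
      by simp [Finset.coe_image], Ideal.span, Submodule.mem_span_finset] at hmem
  obtain ⟨f, -, hf⟩ := hmem
  rw [← hf, map_sum]
  refine Ideal.sum_mem _ fun i hi => ?_
  obtain ⟨y, hyT, rfl⟩ := Finset.mem_image.1 hi
  have hcomm : f (y ^ q) • y ^ q = y ^ q * f (y ^ q) := by
    rw [smul_eq_mul, mul_comm]
  rw [hcomm, hψ]
  exact Ideal.mul_mem_right _ _ (hTspan ▸ Ideal.subset_span hyT)
end

section
/- Let k be an F-finite field of characteristic p > 0, R = k[[X,Y]] the two-dimensional power series ring, and f = X^a + Y^b ∈ R with integers a, b ≥ 2. Set r = ⌈p/a⌉ + ⌈p/b⌉ − 1. Then the F-pure threshold of the principal ideal (f) satisfies (r−1)/p ≤ c((f)) ≤ min{ r/p, 1/a + 1/b }. In particular, if p ≡ 1 (mod ab), then c((f)) = 1/a + 1/b. -/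
set_option synthInstance.maxHeartbeats 1000000
set_option maxHeartbeats 4000000

namespace Stmt11Aux


lemma charP_mv (k : Type*) [Field k] (p : ℕ) [CharP k p] :
    CharP (MvPowerSeries (Fin 2) k) p := by
  constructor
  intro n
  rw [← CharP.cast_eq_zero_iff k p n,
    ← map_natCast ((MvPowerSeries.C (σ := Fin 2) (R := k))) n]
  constructor
  · intro h
    simpa using congrArg (MvPowerSeries.constantCoeff (σ := Fin 2) (R := k)) h
  · intro h
    rw [h, map_zero]

lemma exists_proj (k : Type*) [Field k] (p : ℕ) (hp : p.Prime) [CharP k p] (e : ℕ) :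
    ∃ π : k → k, (∀ x y, π (x + y) = π x + π y) ∧
      (∀ c y, π (c ^ p ^ e * y) = c * π y) ∧ π 1 = 1 := by
  haveI : ExpChar k p := ExpChar.prime hp
  set F := iterateFrobenius k p e with hF
  have hFinj : Function.Injective F := F.injective
  set S : Subfield k := F.fieldRange with hS
  set W : Submodule S k := Submodule.span S {(1 : k)} with hW
  obtain ⟨Q, hQ⟩ := Submodule.exists_isCompl W
  set ℓ := Submodule.linearProjOfIsCompl W Q hQ with hℓ
  have hmem : ∀ y : k, ∃ c : k, F c = ((ℓ y : W) : k) := by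
    intro y
    obtain ⟨c, hc⟩ := Submodule.mem_span_singleton.mp (ℓ y).2
    obtain ⟨c', hc'⟩ := RingHom.mem_fieldRange.mp c.2
    refine ⟨c', ?_⟩
    rw [← hc]
    have : c • (1 : k) = (c : k) * 1 := rfl
    rw [this, mul_one, hc']
  choose π hπ using hmem
  have hsmul : ∀ (c : k) (y : k) (hc : F c ∈ S), (⟨F c, hc⟩ : S) • y = F c * y := fun _ _ _ => rfl
  refine ⟨π, ?_, ?_, ?_⟩
  · intro x y
    apply hFinj
    rw [map_add, hπ, hπ, hπ, map_add]
    rfl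
  · intro c y
    apply hFinj
    have hcS : F c ∈ S := ⟨c, rfl⟩
    have h1 : c ^ p ^ e * y = (⟨F c, hcS⟩ : S) • y := by
      rw [hsmul]; rw [hF]; rfl
    rw [map_mul, hπ, h1, hπ, map_smul]
    have : ((((⟨F c, hcS⟩ : S) • ℓ y : W)) : k) = F c * ((ℓ y : W) : k) := rfl
    rw [this, ← hπ y]
  · apply hFinj
    have h1W : (1 : k) ∈ W := Submodule.mem_span_singleton_self 1
    have h2 : ℓ 1 = ⟨1, h1W⟩ := Submodule.linearProjOfIsCompl_apply_left hQ ⟨1, h1W⟩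
    rw [hπ 1, h2, map_one]


open MvPowerSeries in
lemma exists_split (k : Type*) [Field k] (p : ℕ) (hp : p.Prime) [CharP k p]
    (a b e N i : ℕ) (ha : 1 ≤ a) (hb : 1 ≤ b) (hia : i ≤ N)
    (hX : a * i + 1 ≤ p ^ e) (hY : b * (N - i) + 1 ≤ p ^ e)
    (hC : ((N.choose i : k)) ≠ 0) :
    ∃ d ∈ Ideal.span {(X 0 : MvPowerSeries (Fin 2) k) ^ a + X 1 ^ b} ^ N,
      SplitsFrob (MvPowerSeries (Fin 2) k) (p ^ e) d := by
  classical
  haveI : Fact p.Prime := ⟨hp⟩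
  haveI : CharP (MvPowerSeries (Fin 2) k) p := charP_mv k p
  set R := MvPowerSeries (Fin 2) k with hR
  set q := p ^ e with hq
  have hq1 : 1 ≤ q := Nat.one_le_pow _ _ hp.pos
  obtain ⟨π, πadd, πsemi, π1⟩ := exists_proj k p hp e
  have π0 : π 0 = 0 := by
    have h := πadd 0 0
    rw [add_zero] at h
    exact (left_eq_add.mp h)
  set T : Fin 2 →₀ ℕ := Finsupp.single 0 (q - 1) + Finsupp.single 1 (q - 1) with hT
  have hTap : ∀ j : Fin 2, T j = q - 1 := by
    intro j
    fin_cases j <;> simp [hT, Finsupp.single_apply]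
  have htgt : ∀ (m : Fin 2 →₀ ℕ) (j : Fin 2), (q • m + T) j = q * m j + (q - 1) := by
    intro m j
    rw [Finsupp.add_apply, Finsupp.smul_apply, smul_eq_mul, hTap]
  set ψf : R → R :=
    fun h => (fun m => π (coeff (q • m + T) h) : MvPowerSeries (Fin 2) k) with hψf
  have hcoeff : ∀ (h : R) (m : Fin 2 →₀ ℕ), coeff m (ψf h) = π (coeff (q • m + T) h) :=
    fun h m => rfl
  have ψadd : ∀ u v : R, ψf (u + v) = ψf u + ψf v := by
    intro u v
    apply MvPowerSeries.ext
    intro m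
    rw [map_add, hcoeff, hcoeff, hcoeff, map_add, πadd]
  have hmle : ∀ m : Fin 2 →₀ ℕ, m ≤ q • m + T := by
    intro m j
    rw [htgt]
    have := Nat.mul_le_mul_right (m j) hq1
    omega
  -- X-case
  have hXcase : ∀ (s : Fin 2) (x : R), ψf ((X s : R) ^ q * x) = X s * ψf x := by
    intro s x
    apply MvPowerSeries.ext
    intro m
    rw [hcoeff, X_pow_eq, coeff_monomial_mul]
    rw [show (X s : R) = monomial (Finsupp.single s 1) 1 from X_def s,
      coeff_monomial_mul]
    by_cases hms : 1 ≤ m s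
    · have hle1 : Finsupp.single s q ≤ q • m + T := by
        rw [Finsupp.single_le_iff, htgt]
        have := Nat.mul_le_mul_left q hms
        omega
      have hidx : q • m + T - Finsupp.single s q = q • (m - Finsupp.single s 1) + T := by
        ext j
        rw [Finsupp.tsub_apply, htgt, htgt, Finsupp.tsub_apply]
        by_cases hjs : j = s
        · subst hjs
          rw [Finsupp.single_apply, Finsupp.single_apply, if_pos rfl, if_pos rfl]
          obtain ⟨y, hy⟩ : ∃ y, m j = y + 1 := ⟨m j - 1, by omega⟩
          rw [hy, Nat.add_sub_cancel, Nat.mul_succ]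
          omega
        · rw [Finsupp.single_apply, Finsupp.single_apply, if_neg (fun h => hjs h.symm),
            if_neg (fun h => hjs h.symm)]
          simp only [Nat.sub_zero]
      rw [if_pos hle1, if_pos (Finsupp.single_le_iff.mpr hms), one_mul, one_mul, hcoeff, hidx]
    · have hms0 : m s = 0 := by omega
      have hA : ¬ Finsupp.single s q ≤ q • m + T := by
        rw [Finsupp.single_le_iff, htgt, hms0, mul_zero, zero_add]
        omega
      have hB : ¬ Finsupp.single s 1 ≤ m := by
        rw [Finsupp.single_le_iff]
        omega
      rw [if_neg hA, if_neg hB, π0]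
  -- C-case
  have hCcase : ∀ (c : k) (x : R),
      ψf (((MvPowerSeries.C (σ := Fin 2) (R := k)) c) ^ q * x) = ((MvPowerSeries.C (σ := Fin 2) (R := k)) c) * ψf x := by
    intro c x
    apply MvPowerSeries.ext
    intro m
    rw [hcoeff, ← map_pow, coeff_C_mul, coeff_C_mul, hcoeff, hq, πsemi]
  -- polynomial case
  have hpoly : ∀ (P : MvPolynomial (Fin 2) k) (x : R), ψf ((↑P : R) ^ q * x) = ↑P * ψf x := by
    intro P
    induction P using MvPolynomial.induction_on with
    | C c =>
      intro x
      rw [MvPolynomial.coe_C]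
      exact hCcase c x
    | add u v hu hv =>
      intro x
      rw [MvPolynomial.coe_add, hq, add_pow_char_pow, add_mul, ψadd, ← hq, hu, hv, add_mul]
    | mul_X u s hu =>
      intro x
      rw [MvPolynomial.coe_mul, MvPolynomial.coe_X, mul_pow, mul_assoc, hu (((X s : R)) ^ q * x),
        hXcase s x, ← mul_assoc]
  -- master semilinearity
  have hsemi : ∀ r x : R, ψf (r ^ q * x) = r * ψf x := by
    intro r x
    apply MvPowerSeries.ext
    intro m
    set n : Fin 2 →₀ ℕ := (q • m + T) + (Finsupp.single 0 1 + Finsupp.single 1 1) with hn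
    have hnlt : ∀ m' : Fin 2 →₀ ℕ, m' ≤ q • m + T → m' < n := by
      intro m' hm'
      refine lt_of_le_of_lt hm' (lt_of_le_of_ne le_self_add ?_)
      intro hcontra
      have h2 := DFunLike.congr_fun hcontra 0
      simp only [hn, Finsupp.add_apply] at h2
      have hs1 : (Finsupp.single (0 : Fin 2) 1) 0 = 1 := by simp
      have hs2 : (Finsupp.single (1 : Fin 2) 1) (0 : Fin 2) = 0 := by simp
      rw [hs1, hs2] at h2
      omega
    set P : MvPolynomial (Fin 2) k := trunc k n r with hP
    set h : R := r - ↑P with hh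
    have hrdec : r = ↑P + h := by rw [hh]; ring
    have hhc : ∀ m' : Fin 2 →₀ ℕ, m' ≤ q • m + T → coeff m' h = 0 := by
      intro m' hm'
      rw [hh, map_sub, MvPolynomial.coeff_coe, coeff_trunc, if_pos (hnlt m' hm'), sub_self]
    have hmul0 : ∀ u : R, coeff (q • m + T) (h * u) = 0 := by
      intro u
      rw [coeff_mul]
      apply Finset.sum_eq_zero
      intro x hx
      rw [Finset.HasAntidiagonal.mem_antidiagonal] at hx
      rw [hhc x.1 (le_iff_exists_add.mpr ⟨x.2, hx.symm⟩), zero_mul]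
    have hmul0' : ∀ u : R, coeff m (h * u) = 0 := by
      intro u
      rw [coeff_mul]
      apply Finset.sum_eq_zero
      intro x hx
      rw [Finset.HasAntidiagonal.mem_antidiagonal] at hx
      have hx1 : x.1 ≤ m := le_iff_exists_add.mpr ⟨x.2, hx.symm⟩
      rw [hhc x.1 (hx1.trans (hmle m)), zero_mul]
    have step1 : coeff m (ψf (r ^ q * x)) = coeff m (ψf ((↑P : R) ^ q * x)) := by
      conv_lhs => rw [hrdec]
      rw [hq, add_pow_char_pow, ← hq, add_mul, ψadd, map_add]
      have hz : coeff m (ψf (h ^ q * x)) = 0 := by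
        rw [hcoeff]
        have hdec : h ^ q * x = h * (h ^ (q - 1) * x) := by
          rw [← mul_assoc, ← pow_succ']
          congr 2
          omega
        rw [hdec, hmul0, π0]
      rw [hz, add_zero]
    have step2 : coeff m (r * ψf x) = coeff m ((↑P : R) * ψf x) := by
      conv_lhs => rw [hrdec]
      rw [add_mul, map_add, hmul0', add_zero]
    rw [step1, step2, hpoly]
  -- construct d
  set f : R := X 0 ^ a + X 1 ^ b with hf
  set c : k := ((N.choose i : k))⁻¹ with hc
  set s0 : ℕ := q - 1 - a * i with hs0
  set t0 : ℕ := q - 1 - b * (N - i) with ht0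
  set E0 : Fin 2 →₀ ℕ := Finsupp.single 0 s0 + Finsupp.single 1 t0 with hE0
  set d : R := monomial E0 c * f ^ N with hd
  have hfN : f ^ N = ∑ j ∈ Finset.range (N + 1),
      (X 0 : R) ^ (a * j) * X 1 ^ (b * (N - j)) * ((N.choose j : ℕ) : R) := by
    rw [hf, add_pow]
    apply Finset.sum_congr rfl
    intro j hj
    rw [← pow_mul, ← pow_mul]
  have hdsum : d = ∑ j ∈ Finset.range (N + 1),
      monomial (Finsupp.single 0 (s0 + a * j) + Finsupp.single 1 (t0 + b * (N - j)))
        (c * (N.choose j : k)) := by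
    rw [hd, hfN, Finset.mul_sum]
    apply Finset.sum_congr rfl
    intro j hj
    have hidx2 : E0 + (Finsupp.single 0 (a * j) + Finsupp.single 1 (b * (N - j)))
        = Finsupp.single 0 (s0 + a * j) + Finsupp.single 1 (t0 + b * (N - j)) := by
      rw [hE0, Finsupp.single_add, Finsupp.single_add]
      abel
    rw [X_pow_eq, X_pow_eq, monomial_mul_monomial,
      show ((N.choose j : ℕ) : R) = (monomial (0 : Fin 2 →₀ ℕ)) ((N.choose j : ℕ) : k) from
        by rw [monomial_zero_eq_C_apply, map_natCast],
      monomial_mul_monomial, monomial_mul_monomial]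
    simp only [add_zero, one_mul, mul_one]
    rw [← hidx2]
  -- the coefficient of d at q•m+T
  have hm0 : ∀ m : Fin 2 →₀ ℕ, m 0 = 0 → m 1 = 0 → m = 0 := by
    intro m h0 h1
    ext j
    fin_cases j
    · simpa using h0
    · simpa using h1
  have hsai : s0 + a * i = q - 1 := by omega
  have hsbi : t0 + b * (N - i) = q - 1 := by omega
  have hcd : ∀ m : Fin 2 →₀ ℕ, coeff (q • m + T) d = if m = 0 then 1 else 0 := by
    intro m
    rw [hdsum, map_sum]
    have hterm : ∀ j ∈ Finset.range (N + 1), coeff (q • m + T)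
        (monomial (Finsupp.single 0 (s0 + a * j) + Finsupp.single 1 (t0 + b * (N - j)))
          (c * (N.choose j : k)))
        = if q • m + T = Finsupp.single 0 (s0 + a * j) + Finsupp.single 1 (t0 + b * (N - j))
          then c * (N.choose j : k) else 0 := by
      intro j hj
      rw [coeff_monomial]
    rw [Finset.sum_congr rfl hterm]
    have key : ∀ j ∈ Finset.range (N + 1),
        (Finsupp.single 0 (s0 + a * j) + Finsupp.single 1 (t0 + b * (N - j)) = q • m + T)
        ↔ (j = i ∧ m = 0) := by
      intro j hj
      rw [Finset.mem_range] at hj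
      constructor
      · intro hEq
        have h0 := DFunLike.congr_fun hEq 0
        have h1 := DFunLike.congr_fun hEq 1
        rw [Finsupp.add_apply, Finsupp.single_apply, Finsupp.single_apply, htgt] at h0 h1
        norm_num at h0 h1
        -- h0 : s0 + a * j = q * m 0 + (q - 1), h1 : t0 + b * (N - j) = q * m 1 + (q-1)
        have hji : j = i := by
          rcases lt_trichotomy j i with hlt | heq | hgt
          · have : a * j + a ≤ a * i := by
              have := Nat.mul_le_mul_left a (Nat.succ_le_of_lt hlt)
              rw [Nat.mul_succ] at this
              omega
            omega
          · exact heq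
          · have : b * (N - i) ≥ b * (N - j) + b := by
              have h2 : N - j + 1 ≤ N - i := by omega
              have := Nat.mul_le_mul_left b h2
              rw [Nat.mul_succ] at this
              omega
            omega
        subst hji
        rw [hsai] at h0
        rw [hsbi] at h1
        have hm00 : m 0 = 0 := by
          rcases Nat.eq_zero_or_pos (m 0) with h | h
          · exact h
          · have := Nat.mul_le_mul_left q h
            omega
        have hm11 : m 1 = 0 := by
          rcases Nat.eq_zero_or_pos (m 1) with h | h
          · exact h
          · have := Nat.mul_le_mul_left q h
            omega
        exact ⟨rfl, hm0 m hm00 hm11⟩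
      · rintro ⟨hji, hm⟩
        subst hji
        subst hm
        rw [hsai, hsbi]
        ext j'
        fin_cases j'
        · rw [Finsupp.add_apply, Finsupp.single_apply, Finsupp.single_apply, htgt]
          norm_num
        · rw [Finsupp.add_apply, Finsupp.single_apply, Finsupp.single_apply, htgt]
          norm_num
    by_cases hm : m = 0
    · rw [if_pos hm]
      rw [Finset.sum_eq_single i]
      · rw [if_pos ((key i (Finset.mem_range.mpr (by omega))).mpr ⟨rfl, hm⟩).symm, hc,
          inv_mul_cancel₀ hC]
      · intro j hj hji
        rw [if_neg]
        intro hEq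
        exact hji ((key j hj).mp hEq.symm).1
      · intro hcon
        exact absurd (Finset.mem_range.mpr (by omega : i < N + 1)) hcon
    · rw [if_neg hm]
      apply Finset.sum_eq_zero
      intro j hj
      rw [if_neg]
      intro hEq
      exact hm ((key j hj).mp hEq.symm).2
  refine ⟨d, ?_, ?_⟩
  · rw [Ideal.span_singleton_pow, Ideal.mem_span_singleton]
    exact dvd_mul_left _ _
  · refine ⟨AddMonoidHom.mk' ψf ψadd, fun r x => hsemi r x, ?_⟩
    show ψf d = 1
    apply MvPowerSeries.ext
    intro m
    rw [hcoeff, hcd, coeff_one]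
    split_ifs with hm
    · exact π1
    · exact π0


lemma not_dvd_choose_of_lt (p n j : ℕ) (hp : p.Prime) (hn : n < p) (hj : j ≤ n) :
    ¬ p ∣ n.choose j := by
  intro hdvd
  have hfac := Nat.choose_mul_factorial_mul_factorial hj
  have : p ∣ n.factorial := by
    rw [← hfac]
    exact Dvd.dvd.mul_right (Dvd.dvd.mul_right hdvd _) _
  have := (Nat.Prime.dvd_factorial hp).mp this
  omega

lemma lucas_step (p : ℕ) (hp : p.Prime) (n j c d : ℕ) (hc : c < p) (hd : d < p) :
    (((p * n + c).choose (p * j + d) : ℕ) : ZMod p)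
      = ((n.choose j : ℕ) : ZMod p) * ((c.choose d : ℕ) : ZMod p) := by
  haveI : Fact p.Prime := ⟨hp⟩
  have h := Choose.choose_modEq_choose_mod_mul_choose_div
    (p := p) (n := p * n + c) (k := p * j + d)
  have h2 := (ZMod.intCast_eq_intCast_iff _ _ _).mpr h
  have hmod1 : (p * n + c) % p = c := by
    rw [Nat.mul_add_mod, Nat.mod_eq_of_lt hc]
  have hmod2 : (p * j + d) % p = d := by
    rw [Nat.mul_add_mod, Nat.mod_eq_of_lt hd]
  have hdiv1 : (p * n + c) / p = n := by
    rw [add_comm, Nat.add_mul_div_left _ _ hp.pos, Nat.div_eq_of_lt hc, zero_add]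
  have hdiv2 : (p * j + d) / p = j := by
    rw [add_comm, Nat.add_mul_div_left _ _ hp.pos, Nat.div_eq_of_lt hd, zero_add]
  rw [hmod1, hmod2, hdiv1, hdiv2] at h2
  push_cast at h2
  rw [h2, mul_comm]

/-- Lucas lemma 1 : `C(m*p^j - 1, u*p^j) ≡ C(m-1, u) mod p` for `1 ≤ m ≤ p`. -/
lemma choose_lucas1 (p : ℕ) (hp : p.Prime) (m u : ℕ) (hm1 : 1 ≤ m) (hmp : m ≤ p) :
    ∀ j : ℕ, (((m * p ^ j - 1).choose (u * p ^ j) : ℕ) : ZMod p)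
      = (((m - 1).choose u : ℕ) : ZMod p) := by
  intro j
  induction j with
  | zero => simp
  | succ j ih =>
    have hq1 : 1 ≤ p ^ j := Nat.one_le_pow _ _ hp.pos
    have key1 : m * p ^ (j + 1) - 1 = p * (m * p ^ j - 1) + (p - 1) := by
      have h1 : p * (m * p ^ j - 1) = p * (m * p ^ j) - p := by
        rw [Nat.mul_sub, mul_one]
      have h2 : 1 ≤ m * p ^ j := Nat.one_le_iff_ne_zero.mpr (by positivity)
      have h3 : p ≤ p * (m * p ^ j) := Nat.le_mul_of_pos_right p (by positivity)
      have h4 : m * p ^ (j + 1) = p * (m * p ^ j) := by ring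
      omega
    have key2 : u * p ^ (j + 1) = p * (u * p ^ j) + 0 := by ring
    rw [key1, key2, lucas_step p hp _ _ _ _ (by omega) (by omega), Nat.choose_zero_right, ih]
    push_cast
    ring
/-- Lucas lemma 2 : `C((cA+cB)*G_e, cA*G_e) ≡ C(cA+cB, cA)^e mod p` where
`G_e = 1 + p + ... + p^(e-1)`. -/
lemma choose_lucas2 (p : ℕ) (hp : p.Prime) (cA cB : ℕ) (hcp : cA + cB < p) :
    ∀ e : ℕ, ((((cA + cB) * (∑ i ∈ Finset.range e, p ^ i)).choose
        (cA * (∑ i ∈ Finset.range e, p ^ i)) : ℕ) : ZMod p)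
      = (((cA + cB).choose cA : ℕ) : ZMod p) ^ e := by
  intro e
  induction e with
  | zero => simp
  | succ e ih =>
    have hG : (∑ i ∈ Finset.range (e + 1), p ^ i)
        = p * (∑ i ∈ Finset.range e, p ^ i) + 1 := by
      rw [Finset.sum_range_succ']
      simp only [pow_succ, pow_zero]
      rw [← Finset.sum_mul, mul_comm]
    have key1 : (cA + cB) * (∑ i ∈ Finset.range (e + 1), p ^ i)
        = p * ((cA + cB) * (∑ i ∈ Finset.range e, p ^ i)) + (cA + cB) := by
      rw [hG]; ring
    have key2 : cA * (∑ i ∈ Finset.range (e + 1), p ^ i)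
        = p * (cA * (∑ i ∈ Finset.range e, p ^ i)) + cA := by
      rw [hG]; ring
    rw [key1, key2, lucas_step p hp _ _ _ _ (by omega) (by omega), ih, pow_succ]

open MvPowerSeries in
lemma no_split (k : Type*) [Field k] (q : ℕ) (d : MvPowerSeries (Fin 2) k)
    (hd : d ∈ Ideal.span {(X 0 : MvPowerSeries (Fin 2) k) ^ q, X 1 ^ q}) :
    ¬ SplitsFrob (MvPowerSeries (Fin 2) k) q d := by
  rintro ⟨ψ, hψ, hψd⟩
  obtain ⟨u, v, huv⟩ := Ideal.mem_span_pair.mp hd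
  have hXu : u * X 0 ^ q = (X 0 : MvPowerSeries (Fin 2) k) ^ q * u := mul_comm _ _
  have hXv : v * X 1 ^ q = (X 1 : MvPowerSeries (Fin 2) k) ^ q * v := mul_comm _ _
  have hd2 : ψ d = X 0 * ψ u + X 1 * ψ v := by
    rw [← huv, map_add, hXu, hXv, hψ, hψ]
  have h1 := congrArg ((constantCoeff (σ := Fin 2) (R := k))) hψd
  rw [hd2] at h1
  simp only [map_add, map_mul, map_one, constantCoeff_X, zero_mul] at h1
  simp at h1

open MvPowerSeries in
lemma pow_mem (k : Type*) [Field k] (a b q M : ℕ) (ha : 1 ≤ a) (hb : 1 ≤ b) (hq : 1 ≤ q)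
    (hM : ⌈(q : ℝ) / a⌉₊ + ⌈(q : ℝ) / b⌉₊ - 1 ≤ M) :
    ((X 0 : MvPowerSeries (Fin 2) k) ^ a + X 1 ^ b) ^ M
      ∈ Ideal.span {(X 0 : MvPowerSeries (Fin 2) k) ^ q, X 1 ^ q} := by
  rw [add_pow]
  apply Ideal.sum_mem
  intro j hj
  rw [Finset.mem_range] at hj
  by_cases hc : q ≤ a * j
  · apply Ideal.mul_mem_right
    apply Ideal.mul_mem_right
    have hXj : ((X 0 : MvPowerSeries (Fin 2) k) ^ a) ^ j = X 0 ^ q * X 0 ^ (a * j - q) := by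
      rw [← pow_mul, ← pow_add]
      congr 1
      omega
    rw [hXj]
    exact Ideal.mul_mem_right _ _ (Ideal.subset_span (by simp))
  · push_neg at hc
    have haq : 0 < (q : ℝ) / a := by positivity
    have hja : (j : ℝ) < (q : ℝ) / a := by
      rw [lt_div_iff₀ (by positivity)]
      have : a * j < q := hc
      exact_mod_cast by rw [mul_comm] at this; exact_mod_cast this
    have hj2 : j + 1 ≤ ⌈(q : ℝ) / a⌉₊ := by
      have h5 : (j : ℝ) < (⌈(q : ℝ) / a⌉₊ : ℝ) := hja.trans_le (Nat.le_ceil _)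
      exact_mod_cast h5
    have hcb : ⌈(q : ℝ) / b⌉₊ ≤ M - j := by omega
    have hqb : q ≤ b * (M - j) := by
      have h1 : (q : ℝ) / b ≤ (⌈(q : ℝ) / b⌉₊ : ℝ) := Nat.le_ceil _
      have h2 : (q : ℝ) ≤ b * ⌈(q : ℝ) / b⌉₊ := by
        rw [div_le_iff₀ (by positivity)] at h1
        linarith
      have h3 : q ≤ b * ⌈(q : ℝ) / b⌉₊ := by exact_mod_cast h2
      calc q ≤ b * ⌈(q : ℝ) / b⌉₊ := h3
        _ ≤ b * (M - j) := Nat.mul_le_mul_left b hcb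
    apply Ideal.mul_mem_right
    apply Ideal.mul_mem_left
    have hXj : ((X 1 : MvPowerSeries (Fin 2) k) ^ b) ^ (M - j)
        = X 1 ^ q * X 1 ^ (b * (M - j) - q) := by
      rw [← pow_mul, ← pow_add]
      congr 1
      omega
    rw [hXj]
    exact Ideal.mul_mem_right _ _ (Ideal.subset_span (by simp))

open MvPowerSeries in
lemma pow_span_mem (k : Type*) [Field k] (p : ℕ) (hp : p.Prime) [CharP k p]
    (g : MvPowerSeries (Fin 2) k) (K q' j : ℕ)
    (h : g ^ K ∈ Ideal.span {(X 0 : MvPowerSeries (Fin 2) k) ^ q', X 1 ^ q'}) :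
    g ^ (K * p ^ j) ∈ Ideal.span
      {(X 0 : MvPowerSeries (Fin 2) k) ^ (q' * p ^ j), X 1 ^ (q' * p ^ j)} := by
  haveI : Fact p.Prime := ⟨hp⟩
  haveI : CharP (MvPowerSeries (Fin 2) k) p := charP_mv k p
  induction j with
  | zero => simpa using h
  | succ j ih =>
    obtain ⟨u, v, huv⟩ := Ideal.mem_span_pair.mp ih
    rw [Ideal.mem_span_pair]
    refine ⟨u ^ p, v ^ p, ?_⟩
    have hgp : g ^ (K * p ^ (j + 1)) = (g ^ (K * p ^ j)) ^ p := by
      rw [← pow_mul, pow_succ, mul_assoc]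
    have hX0 : ((X 0 : MvPowerSeries (Fin 2) k) ^ (q' * p ^ j)) ^ p = X 0 ^ (q' * p ^ (j+1)) := by
      rw [← pow_mul, pow_succ, mul_assoc]
    have hX1 : ((X 1 : MvPowerSeries (Fin 2) k) ^ (q' * p ^ j)) ^ p = X 1 ^ (q' * p ^ (j+1)) := by
      rw [← pow_mul, pow_succ, mul_assoc]
    rw [hgp, ← huv, add_pow_char, mul_pow, mul_pow, hX0, hX1]


end Stmt11Aux

open MvPowerSeries in
/-- for `f = Xᵃ + Yᵇ` in `R = k[[X,Y]]` with `a, b ≥ 2` and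
`r = ⌈p/a⌉ + ⌈p/b⌉ - 1`, one has `(r-1)/p ≤ c((f)) ≤ min (r/p) (1/a + 1/b)`;
in particular `c((f)) = 1/a + 1/b` whenever `p ≡ 1 (mod ab)`. -/
theorem stmt11 (k : Type*) [Field k] (p : ℕ) (hp : p.Prime) [CharP k p]
    (hkF : FFinite k p) (a b : ℕ) (ha : 2 ≤ a) (hb : 2 ≤ b)
    (r : ℕ) (hr : r = ⌈(p : ℝ) / a⌉₊ + ⌈(p : ℝ) / b⌉₊ - 1) :
    (((r : ℝ) - 1) / p ≤
        fpt (MvPowerSeries (Fin 2) k) p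
          (Ideal.span {(MvPowerSeries.X 0 : MvPowerSeries (Fin 2) k) ^ a +
            MvPowerSeries.X 1 ^ b}) ∧
      fpt (MvPowerSeries (Fin 2) k) p
          (Ideal.span {(MvPowerSeries.X 0 : MvPowerSeries (Fin 2) k) ^ a +
            MvPowerSeries.X 1 ^ b}) ≤ min ((r : ℝ) / p) (1 / a + 1 / b)) ∧
    (p % (a * b) = 1 →
      fpt (MvPowerSeries (Fin 2) k) p
          (Ideal.span {(MvPowerSeries.X 0 : MvPowerSeries (Fin 2) k) ^ a +
            MvPowerSeries.X 1 ^ b}) = 1 / a + 1 / b) := by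
  classical
  haveI : Fact p.Prime := ⟨hp⟩
  have hp2 : 2 ≤ p := hp.two_le
  have hap : (0:ℝ) < a := by positivity
  have hbp : (0:ℝ) < b := by positivity
  have hpr : (0:ℝ) < p := by positivity
  have h1p : (1:ℝ) < p := by exact_mod_cast hp2
  set R : Type _ := MvPowerSeries (Fin 2) k with hR
  set f : R := X 0 ^ a + X 1 ^ b with hf
  set I : Ideal R := Ideal.span {f} with hI
  set S : Set ℝ := {s : ℝ | 0 ≤ s ∧ FPurePair R p I s} with hSdef
  have hfpt : fpt R p I = sSup S := rfl
  have hmul_pred : ∀ x y : ℕ, 1 ≤ y → x * (y - 1) + x = x * y := by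
    intro x y hy
    obtain ⟨z, rfl⟩ : ∃ z, y = z + 1 := ⟨y - 1, by omega⟩
    rw [Nat.add_sub_cancel, Nat.mul_succ]
  -- generic membership criterion
  have hmem_gen : ∀ t : ℝ, 0 ≤ t →
      (∀ e : ℕ, 1 ≤ e → ∃ N i : ℕ, ⌊t * ((p:ℝ)^e - 1)⌋₊ ≤ N ∧ i ≤ N ∧
        a * i + 1 ≤ p ^ e ∧ b * (N - i) + 1 ≤ p ^ e ∧ ((N.choose i : k)) ≠ 0) → t ∈ S := by
    intro t ht0 hex
    refine ⟨ht0, 1, fun e he => ?_⟩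
    obtain ⟨N, i, hNle, hi, hXe, hYe, hCe⟩ := hex e he
    obtain ⟨d, hdmem, hsplit⟩ :=
      Stmt11Aux.exists_split k p hp a b e N i (by omega) (by omega) hi hXe hYe hCe
    exact ⟨d, Ideal.pow_le_pow_right hNle hdmem, hsplit⟩
  -- ceiling facts
  have hcA1 : 1 ≤ ⌈(p:ℝ)/a⌉₊ := Nat.ceil_pos.mpr (by positivity)
  have hcB1 : 1 ≤ ⌈(p:ℝ)/b⌉₊ := Nat.ceil_pos.mpr (by positivity)
  have hr1 : 1 ≤ r := by omega
  have hceil_lt : ∀ c : ℕ, 2 ≤ c → c * ⌈(p:ℝ)/c⌉₊ < p + c := by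
    intro c hc
    have hcp : (0:ℝ) < c := by positivity
    have h1 : (⌈(p:ℝ)/c⌉₊ : ℝ) < (p:ℝ)/c + 1 := Nat.ceil_lt_add_one (by positivity)
    have h2 : (c:ℝ) * ⌈(p:ℝ)/c⌉₊ < p + c := by
      have h3 : (c:ℝ) * ((p:ℝ)/c + 1) = p + c := by field_simp
      nlinarith
    exact_mod_cast h2
  have hau : a * (⌈(p:ℝ)/a⌉₊ - 1) ≤ p - 1 := by
    have h1 := hceil_lt a ha
    have h2 := hmul_pred a (⌈(p:ℝ)/a⌉₊) hcA1
    omega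
  have hbv : b * (⌈(p:ℝ)/b⌉₊ - 1) ≤ p - 1 := by
    have h1 := hceil_lt b hb
    have h2 := hmul_pred b (⌈(p:ℝ)/b⌉₊) hcB1
    omega
  -- upper bound for each element of S
  have hub : ∀ t ∈ S, t ≤ min ((r:ℝ)/p) (1/(a:ℝ) + 1/(b:ℝ)) := by
    rintro t ⟨ht0, e₀, hFP⟩
    have hnm : ∀ e : ℕ, 1 ≤ e → e₀ ≤ e →
        f ^ ⌊t * ((p:ℝ)^e - 1)⌋₊ ∉ Ideal.span {(X 0 : R)^(p^e), X 1^(p^e)} := by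
      intro e he1 he0 hmem
      obtain ⟨d, hdI, hsplit⟩ := hFP e he0
      refine Stmt11Aux.no_split k (p^e) d ?_ hsplit
      rw [hI, Ideal.span_singleton_pow, Ideal.mem_span_singleton] at hdI
      obtain ⟨g, hg⟩ := hdI
      rw [hg]
      exact Ideal.mul_mem_right _ _ hmem
    have hb1 : ∀ e : ℕ, 1 ≤ e → e₀ ≤ e → ⌊t * ((p:ℝ)^e - 1)⌋₊ < r * p^(e-1) := by
      intro e he1 he0
      by_contra hge
      push_neg at hge
      apply hnm e he1 he0
      have hfr : f ^ r ∈ Ideal.span {(X 0 : R)^p, X 1^p} :=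
        Stmt11Aux.pow_mem k a b p r (by omega) (by omega) (by omega) hr.ge
      have h2 := Stmt11Aux.pow_span_mem k p hp f r p (e-1) hfr
      have hpe : p * p^(e-1) = p^e := by
        rw [← pow_succ']
        congr 1
        omega
      rw [hpe] at h2
      have hsplit2 : f ^ ⌊t * ((p:ℝ)^e - 1)⌋₊
          = f ^ (r * p^(e-1)) * f ^ (⌊t * ((p:ℝ)^e - 1)⌋₊ - r * p^(e-1)) := by
        rw [← pow_add]
        congr 1
        omega
      rw [hsplit2]
      exact Ideal.mul_mem_right _ _ h2
    have hb2 : ∀ e : ℕ, 1 ≤ e → e₀ ≤ e →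
        ⌊t * ((p:ℝ)^e - 1)⌋₊ + 1 ≤ ⌈((p^e : ℕ) : ℝ)/a⌉₊ + ⌈((p^e : ℕ):ℝ)/b⌉₊ - 1 := by
      intro e he1 he0
      by_contra hge
      push_neg at hge
      apply hnm e he1 he0
      exact Stmt11Aux.pow_mem k a b (p^e) _ (by omega) (by omega)
        (Nat.one_le_pow _ _ (by omega)) (by omega)
    rw [le_min_iff]
    constructor
    · by_contra hlt
      push_neg at hlt
      have hrp : (r:ℝ) < t * p := by rwa [div_lt_iff₀ hpr] at hlt
      obtain ⟨e', he'⟩ := pow_unbounded_of_one_lt ((t+1)/(t*p - r)) h1p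
      set e := max (e' + 1) (max 1 e₀) with he
      have he1 : 1 ≤ e := le_trans (le_max_left 1 e₀) (le_max_right _ _)
      have he0 : e₀ ≤ e := le_trans (le_max_right 1 e₀) (le_max_right _ _)
      have hee' : e' ≤ e - 1 := by
        have := le_max_left (e'+1) (max 1 e₀)
        omega
      have hN := hb1 e he1 he0
      have hfloor : t * ((p:ℝ)^e - 1) - 1 < (⌊t * ((p:ℝ)^e - 1)⌋₊ : ℝ) :=
        Nat.sub_one_lt_floor _
      have hcast : ((⌊t * ((p:ℝ)^e - 1)⌋₊ : ℕ) : ℝ) < (r : ℝ) * (p:ℝ)^(e-1) := by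
        have h6 := Nat.cast_lt (α := ℝ).mpr hN
        push_cast at h6
        exact h6
      have hpe : (p:ℝ)^e = (p:ℝ)^(e-1) * p := by
        rw [← pow_succ]
        congr 1
        omega
      set A : ℝ := (p:ℝ)^(e-1) with hA
      have hApos : (0:ℝ) < A := by positivity
      have h3 : t * ((p:ℝ)^e - 1) < (r:ℝ) * A + 1 := by linarith
      have hXeq : t * ((p:ℝ)^e - 1) = (t*p)*A - t := by rw [hpe]; ring
      have hring : (t*p - r)*A = (t*p)*A - (r:ℝ)*A := by ring
      have h4 : (t*p - r) * A < t + 1 := by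
        rw [hring]
        rw [hXeq] at h3
        linarith
      have h5 : t + 1 < (t*p - r) * A := by
        have hgeo : ((t+1)/(t*p-r)) < A :=
          lt_of_lt_of_le he' (by
            rw [hA]
            exact pow_le_pow_right₀ (by linarith) hee')
        rw [div_lt_iff₀ (by linarith)] at hgeo
        calc t + 1 < A * (t*p - r) := hgeo
          _ = (t*p - r) * A := mul_comm _ _
      linarith
    · by_contra hlt
      push_neg at hlt
      have hts : 0 < t - (1/(a:ℝ) + 1/(b:ℝ)) := by linarith
      obtain ⟨e', he'⟩ := pow_unbounded_of_one_lt ((t+2)/(t - (1/(a:ℝ) + 1/(b:ℝ)))) h1p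
      set e := max e' (max 1 e₀) with he
      have he1 : 1 ≤ e := le_trans (le_max_left 1 e₀) (le_max_right _ _)
      have he0 : e₀ ≤ e := le_trans (le_max_right 1 e₀) (le_max_right _ _)
      have hee' : e' ≤ e := le_max_left _ _
      have hN := hb2 e he1 he0
      have hfloor : t * ((p:ℝ)^e - 1) - 1 < (⌊t * ((p:ℝ)^e - 1)⌋₊ : ℝ) :=
        Nat.sub_one_lt_floor _
      have hpecast : ((p^e : ℕ) : ℝ) = (p:ℝ)^e := by push_cast; ring
      have hcA1e : 1 ≤ ⌈((p^e : ℕ):ℝ)/a⌉₊ := Nat.ceil_pos.mpr (by positivity)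
      have hcB1e : 1 ≤ ⌈((p^e : ℕ):ℝ)/b⌉₊ := Nat.ceil_pos.mpr (by positivity)
      have hcast : ((⌊t * ((p:ℝ)^e - 1)⌋₊ : ℕ) : ℝ) + 1
          ≤ (⌈((p^e : ℕ):ℝ)/a⌉₊ : ℝ) + (⌈((p^e : ℕ):ℝ)/b⌉₊ : ℝ) - 1 := by
        have h6 := (Nat.cast_le (α := ℝ)).mpr hN
        rw [Nat.cast_sub (by omega), Nat.cast_add, Nat.cast_add] at h6
        push_cast at h6 ⊢
        linarith
      have hcale : (⌈((p^e : ℕ):ℝ)/a⌉₊ : ℝ) < (p:ℝ)^e/a + 1 := by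
        calc (⌈((p^e : ℕ):ℝ)/a⌉₊ : ℝ) < ((p^e : ℕ):ℝ)/a + 1 :=
              Nat.ceil_lt_add_one (by positivity)
          _ = (p:ℝ)^e/a + 1 := by rw [hpecast]
      have hcble : (⌈((p^e : ℕ):ℝ)/b⌉₊ : ℝ) < (p:ℝ)^e/b + 1 := by
        calc (⌈((p^e : ℕ):ℝ)/b⌉₊ : ℝ) < ((p^e : ℕ):ℝ)/b + 1 :=
              Nat.ceil_lt_add_one (by positivity)
          _ = (p:ℝ)^e/b + 1 := by rw [hpecast]
      have hps : (p:ℝ)^e * (1/(a:ℝ) + 1/(b:ℝ)) = (p:ℝ)^e/a + (p:ℝ)^e/b := by ring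
      have hchain : t * ((p:ℝ)^e - 1) < (p:ℝ)^e * (1/(a:ℝ) + 1/(b:ℝ)) + 1 := by linarith
      have h4 : (p:ℝ)^e * (t - (1/(a:ℝ) + 1/(b:ℝ))) < t + 2 := by nlinarith [hchain, ht0]
      have h5 : t + 2 < (p:ℝ)^e * (t - (1/(a:ℝ) + 1/(b:ℝ))) := by
        have hgeo : ((t+2)/(t - (1/(a:ℝ) + 1/(b:ℝ)))) < (p:ℝ)^e := by
          refine lt_of_lt_of_le he' ?_
          exact pow_le_pow_right₀ (by linarith) hee'
        rw [div_lt_iff₀ hts] at hgeo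
        linarith [hgeo]
      linarith
  -- S is bounded above
  have hbddS : BddAbove S := by
    refine ⟨1, fun t ht => ?_⟩
    have h1 := (hub t ht).trans (min_le_right _ _)
    have h2 : 1/(a:ℝ) ≤ 1/2 := by
      apply one_div_le_one_div_of_le
      · norm_num
      · exact_mod_cast ha
    have h3 : 1/(b:ℝ) ≤ 1/2 := by
      apply one_div_le_one_div_of_le
      · norm_num
      · exact_mod_cast hb
    linarith
  -- lower bound : membership of (r-1)/p
  have hrcast : ((r:ℝ) - 1) = (((r - 1 : ℕ)) : ℝ) := by
    rw [Nat.cast_sub hr1, Nat.cast_one]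
  have hlow_mem : (((r - 1 : ℕ) : ℝ))/p ∈ S := by
    set m : ℕ := r - 1 with hm
    apply hmem_gen _ (by positivity)
    intro e he1
    set P : ℕ := p^(e-1) with hP
    have hpP : p * P = p^e := by
      rw [hP, ← pow_succ']
      congr 1
      omega
    have hP1 : 1 ≤ P := Nat.one_le_pow _ _ (by omega)
    by_cases hm0 : m = 0
    · have hpow1 : 1 ≤ p^e := Nat.one_le_pow _ _ (by omega)
      refine ⟨0, 0, ?_, le_rfl, by omega, by omega, ?_⟩
      · simp [hm0]
      · simp only [Nat.choose_self, Nat.cast_one]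
        exact one_ne_zero
    · set u : ℕ := ⌈(p:ℝ)/a⌉₊ - 1 with hu
      set v : ℕ := ⌈(p:ℝ)/b⌉₊ - 1 with hv
      have hm_uv : m = u + v := by omega
      have hm1 : 1 ≤ m := by omega
      have hau2 : 2*u ≤ a*u := Nat.mul_le_mul_right u ha
      have hbv2 : 2*v ≤ b*v := Nat.mul_le_mul_right v hb
      have hmp : m ≤ p := by omega
      have hNfloor : ⌊(m:ℝ)/p * ((p:ℝ)^e - 1)⌋₊ ≤ m * P - 1 := by
        have hpeR : (p:ℝ)^e = (p:ℝ) * P := by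
          rw [hP]
          push_cast
          rw [← pow_succ']
          congr 1
          omega
        have h1 : (m:ℝ)/p * ((p:ℝ)^e - 1) < (m:ℝ) * P := by
          rw [hpeR, div_mul_eq_mul_div, div_lt_iff₀ hpr]
          have hm1R : (1:ℝ) ≤ m := by exact_mod_cast hm1
          nlinarith
        have h2 : ⌊(m:ℝ)/p * ((p:ℝ)^e - 1)⌋₊ < m * P := by
          have h30 : (1:ℝ) ≤ (p:ℝ)^e := by
            exact_mod_cast Nat.one_le_pow e p (by omega)
          rw [Nat.floor_lt (by
            apply mul_nonneg (by positivity)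
            linarith)]
          push_cast
          exact h1
        omega
      have E5 : (p - 1) * P + P = p * P := by
        have h9 : (p-1)*P + 1*P = ((p-1)+1)*P := (add_mul _ _ _).symm
        have h10 : (p-1)+1 = p := by omega
        rw [h10] at h9
        omega
      by_cases hv1 : 1 ≤ v
      · have E1 : m*P = u*P + v*P := by rw [hm_uv]; ring
        have E2 : 1 ≤ v*P := by
          calc 1 = 1*1 := by omega
          _ ≤ v*P := Nat.mul_le_mul hv1 hP1
        have E3 : a*(u*P) = (a*u)*P := by ring
        have E4 : (a*u)*P ≤ (p-1)*P := Nat.mul_le_mul_right P (by omega)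
        refine ⟨m*P - 1, u*P, hNfloor, by omega, by omega, ?_, ?_⟩
        · have hNi : m*P - 1 - u*P = v*P - 1 := by omega
          rw [hNi]
          have E7 : b*(v*P-1) + b = b*(v*P) := hmul_pred b (v*P) E2
          have E8 : b*(v*P) = (b*v)*P := by ring
          have E9 : (b*v)*P ≤ (p-1)*P := Nat.mul_le_mul_right P (by omega)
          omega
        · have hL := Stmt11Aux.choose_lucas1 p hp m u hm1 hmp (e-1)
          rw [← hP] at hL
          intro hzero
          have hdvd : p ∣ (m*P-1).choose (u*P) := (CharP.cast_eq_zero_iff k p _).mp hzero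
          have hz2 : (((m*P-1).choose (u*P) : ℕ) : ZMod p) = 0 :=
            (ZMod.natCast_eq_zero_iff _ p).mpr hdvd
          rw [hL] at hz2
          exact Stmt11Aux.not_dvd_choose_of_lt p (m-1) u hp (by omega) (by omega)
            ((ZMod.natCast_eq_zero_iff _ p).mp hz2)
      · -- v = 0, so u = m
        have hum : u = m := by omega
        have E3 : a*(m*P) = (a*m)*P := by ring
        have hau' : a * m ≤ p - 1 := by rw [← hum]; exact hau
        have E4 : (a*m)*P ≤ (p-1)*P := Nat.mul_le_mul_right P hau'
        have E2m : 1 ≤ m*P := by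
          calc 1 = 1*1 := by omega
          _ ≤ m*P := Nat.mul_le_mul hm1 hP1
        refine ⟨m*P - 1, m*P - 1, hNfloor, le_rfl, ?_, ?_, ?_⟩
        · have E7 : a*(m*P-1) + a = a*(m*P) := hmul_pred a (m*P) E2m
          omega
        · simp only [Nat.sub_self]
          have : b * 0 + 1 = 1 := by omega
          omega
        · simp only [Nat.choose_self, Nat.cast_one]
          exact one_ne_zero
  have hlower : ((r:ℝ) - 1)/p ≤ sSup S := by
    rw [hrcast]
    exact le_csSup hbddS hlow_mem
  have hupper : sSup S ≤ min ((r:ℝ)/p) (1/(a:ℝ) + 1/(b:ℝ)) := by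
    apply Real.sSup_le hub
    apply le_min
    · positivity
    · positivity
  refine ⟨⟨hlower, hupper⟩, ?_⟩
  -- part 2
  intro hmod
  have hab4 : 4 ≤ a * b := by nlinarith
  have hdvd1 : a * b ∣ p - 1 := by
    have hdm := Nat.div_add_mod p (a*b)
    rw [hmod] at hdm
    exact ⟨p/(a*b), by omega⟩
  have hgeom : ∀ e : ℕ, (p-1) * (∑ i ∈ Finset.range e, p ^ i) = p^e - 1 := by
    intro e
    induction e with
    | zero => simp
    | succ e ih =>
      rw [Finset.sum_range_succ, Nat.mul_add, ih]
      have h1 : 1 ≤ p^e := Nat.one_le_pow _ _ (by omega)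
      have h2 : (p-1) * p^e + p^e = p * p^e := by
        have h3 : (p-1)*p^e + 1*p^e = ((p-1)+1)*p^e := (add_mul _ _ _).symm
        have h4 : (p-1)+1 = p := by omega
        rw [h4] at h3
        omega
      have h5 : p * p^e = p^(e+1) := (pow_succ' p e).symm
      omega
  set K : ℕ := (p-1)/(a*b) with hK
  have hKab : a*b*K = p - 1 := Nat.mul_div_cancel' hdvd1
  set cA : ℕ := b*K with hcA
  set cB : ℕ := a*K with hcB
  have hacA : a * cA = p - 1 := by rw [hcA, ← hKab]; ring
  have hbcB : b * cB = p - 1 := by rw [hcB, ← hKab]; ring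
  have habK : a + b ≤ a*b := by nlinarith
  have hcAB : cA + cB ≤ p - 1 := by
    have h1 : cA + cB = (a+b)*K := by rw [hcA, hcB]; ring
    have h2 : (a+b)*K ≤ (a*b)*K := Nat.mul_le_mul_right K habK
    omega
  have htS : (1/(a:ℝ) + 1/(b:ℝ)) ∈ S := by
    apply hmem_gen _ (by positivity)
    intro e he1
    set G : ℕ := ∑ i ∈ Finset.range e, p ^ i with hG
    have hgeomE : (p-1) * G = p^e - 1 := hgeom e
    have hpe1 : 1 ≤ p^e := Nat.one_le_pow _ _ (by omega)
    have hai : a * (cA * G) = p^e - 1 := by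
      have : a * (cA*G) = (a*cA)*G := by ring
      rw [this, hacA, hgeomE]
    have hbj : b * (cB * G) = p^e - 1 := by
      have : b * (cB*G) = (b*cB)*G := by ring
      rw [this, hbcB, hgeomE]
    have hfloor_eq : ⌊(1/(a:ℝ) + 1/(b:ℝ)) * ((p:ℝ)^e - 1)⌋₊ = cA*G + cB*G := by
      have hcag : (cA:ℝ) * (G:ℝ) = ((p:ℝ)^e - 1)/a := by
        have h6 := congrArg (fun n : ℕ => (n : ℝ)) hai
        push_cast [Nat.cast_sub hpe1] at h6
        rw [eq_div_iff (show (a:ℝ) ≠ 0 by positivity)]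
        linarith [h6]
      have hcbg : (cB:ℝ) * (G:ℝ) = ((p:ℝ)^e - 1)/b := by
        have h6 := congrArg (fun n : ℕ => (n : ℝ)) hbj
        push_cast [Nat.cast_sub hpe1] at h6
        rw [eq_div_iff (show (b:ℝ) ≠ 0 by positivity)]
        linarith [h6]
      have heq : (1/(a:ℝ) + 1/(b:ℝ)) * ((p:ℝ)^e - 1) = ((cA*G + cB*G : ℕ) : ℝ) := by
        push_cast
        rw [hcag, hcbg]
        ring
      rw [heq, Nat.floor_natCast]
    refine ⟨cA*G + cB*G, cA*G, le_of_eq hfloor_eq, Nat.le_add_right _ _, by omega, ?_, ?_⟩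
    · have h7 : cA*G + cB*G - cA*G = cB*G := by omega
      rw [h7]
      omega
    · have hL := Stmt11Aux.choose_lucas2 p hp cA cB (by omega) e
      rw [← hG] at hL
      have hchoose_eq : (cA*G + cB*G).choose (cA*G) = ((cA+cB)*G).choose (cA*G) := by
        rw [add_mul]
      intro hzero
      have hdvd : p ∣ (cA*G + cB*G).choose (cA*G) := (CharP.cast_eq_zero_iff k p _).mp hzero
      rw [hchoose_eq] at hdvd
      have hz2 : ((((cA+cB)*G).choose (cA*G) : ℕ) : ZMod p) = 0 :=
        (ZMod.natCast_eq_zero_iff _ p).mpr hdvd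
      rw [hL] at hz2
      have hbase : ¬ p ∣ (cA+cB).choose cA :=
        Stmt11Aux.not_dvd_choose_of_lt p (cA+cB) cA hp (by omega) (by omega)
      have hbase2 : (((cA+cB).choose cA : ℕ) : ZMod p) ≠ 0 :=
        fun hz => hbase ((ZMod.natCast_eq_zero_iff _ p).mp hz)
      exact pow_ne_zero e hbase2 hz2
  have h2 := le_csSup hbddS htS
  have h3 := hupper.trans (min_le_right _ _)
  exact le_antisymm h3 h2
end

section
/- Let (R, m) be an F-finite F-pure reduced local ring of characteristic p > 0 and let a, b ⊆ R be ideals of positive height. Then c(a) + c(b) ≥ c(a + b). -/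
section Aux

variable {R : Type*} [CommRing R]

lemma ideal_le_sum {ι : Type*} [DecidableEq ι] {s : Finset ι} (f : ι → Ideal R) {j : ι}
    (hj : j ∈ s) : f j ≤ ∑ i ∈ s, f i := by
  have h : f j + ∑ i ∈ s.erase j, f i = ∑ i ∈ s, f i := Finset.add_sum_erase _ f hj
  rw [← h, Submodule.add_eq_sup]
  exact le_sup_left

lemma ideal_sum_le {ι : Type*} [DecidableEq ι] {s : Finset ι} {f : ι → Ideal R} {T : Ideal R}
    (h : ∀ i ∈ s, f i ≤ T) : ∑ i ∈ s, f i ≤ T := by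
  induction s using Finset.induction_on with
  | empty => simp
  | insert _ _ hni ih =>
    rename_i i s
    rw [Finset.sum_insert hni, Submodule.add_eq_sup]
    exact sup_le (h i (Finset.mem_insert_self i s))
      (ih fun j hj => h j (Finset.mem_insert_of_mem hj))

/-- Binomial-type expansion bound for powers of a sup of ideals. -/
lemma sup_pow_le (a b : Ideal R) (n : ℕ) :
    (a ⊔ b) ^ n ≤ ∑ i ∈ Finset.range (n + 1), a ^ i * b ^ (n - i) := by
  induction n with
  | zero => simp
  | succ n ih =>
    calc (a ⊔ b) ^ (n + 1) = (a ⊔ b) ^ n * (a ⊔ b) := pow_succ _ _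
    _ ≤ (∑ i ∈ Finset.range (n + 1), a ^ i * b ^ (n - i)) * (a ⊔ b) :=
        Ideal.mul_mono_left ih
    _ = ∑ i ∈ Finset.range (n + 1),
          (a ^ i * b ^ (n - i) * a ⊔ a ^ i * b ^ (n - i) * b) := by
        rw [Finset.sum_mul]
        exact Finset.sum_congr rfl fun i _ => Ideal.mul_sup _ _ _
    _ ≤ ∑ i ∈ Finset.range (n + 2), a ^ i * b ^ (n + 1 - i) := by
        refine ideal_sum_le fun i hi => sup_le ?_ ?_
        · have hi' : i ≤ n := Finset.mem_range_succ_iff.mp hi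
          have h1 : a ^ i * b ^ (n - i) * a = a ^ (i + 1) * b ^ (n + 1 - (i + 1)) := by
            have : n + 1 - (i + 1) = n - i := by omega
            rw [this]; ring
          rw [h1]
          exact ideal_le_sum (fun i => a ^ i * b ^ (n + 1 - i))
            (Finset.mem_range.mpr (by omega))
        · have hi' : i ≤ n := Finset.mem_range_succ_iff.mp hi
          have h1 : a ^ i * b ^ (n - i) * b = a ^ i * b ^ (n + 1 - i) := by
            have : n + 1 - i = (n - i) + 1 := by omega
            rw [this]; ring
          rw [h1]
          exact ideal_le_sum (fun i => a ^ i * b ^ (n + 1 - i))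
            (Finset.mem_range.mpr (by omega))

/-- An element of a finite sum of ideals decomposes as a sum of elements of the ideals. -/
lemma mem_ideal_finset_sum {ι : Type*} [DecidableEq ι] {s : Finset ι} {f : ι → Ideal R} {d : R}
    (h : d ∈ ∑ i ∈ s, f i) :
    ∃ g : ι → R, (∀ i ∈ s, g i ∈ f i) ∧ d = ∑ i ∈ s, g i := by
  induction s using Finset.induction_on generalizing d with
  | empty =>
    refine ⟨fun _ => 0, by simp, ?_⟩
    simpa using h
  | insert _ _ hni ih =>
    rename_i i s
    rw [Finset.sum_insert hni, Submodule.add_eq_sup] at h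
    obtain ⟨y, hy, z, hz, hyz⟩ := Submodule.mem_sup.mp h
    obtain ⟨g, hg, rfl⟩ := ih hz
    refine ⟨Function.update g i y, fun j hj => ?_, ?_⟩
    · rcases Finset.mem_insert.mp hj with rfl | hj'
      · simpa using hy
      · rw [Function.update_of_ne (by rintro rfl; exact hni hj')]; exact hg j hj'
    · rw [Finset.sum_insert hni, Function.update_self,
        Finset.sum_update_of_notMem hni]
      exact hyz.symm

/-- From a splitting `ψ d = 1` at a single level `q = p ^ e₁` with `d ∈ a ^ m`, `m ≥ t q`,
and F-purity of `R`, the pair `(R, a^t)` is F-pure ("strongly F-pure implies F-pure"). -/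
lemma fpurePair_of_strong {p : ℕ} (hp : 1 < p) (hFP : FPureRing R p)
    {a : Ideal R} {t : ℝ} (ht : 0 ≤ t) {e₁ : ℕ} (he₁ : 1 ≤ e₁) {d : R} {m : ℕ}
    (hm : t * (p : ℝ) ^ e₁ ≤ (m : ℝ)) (hd : d ∈ a ^ m)
    (hs : SplitsFrob R (p ^ e₁) d) : FPurePair R p a t := by
  obtain ⟨ψ, hψ, hψd⟩ := hs
  set q := p ^ e₁ with hq
  have main : ∀ u : ℕ, ∃ Φ : R →+ R,
      (∀ r x : R, Φ (r ^ q ^ u * x) = r * Φ x) ∧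
      Φ (d ^ ∑ j ∈ Finset.range u, q ^ j) = 1 := by
    intro u
    induction u with
    | zero => exact ⟨AddMonoidHom.id R, by intro r x; simp, by simp⟩
    | succ u ih =>
      obtain ⟨Φ, h1, h2⟩ := ih
      refine ⟨Φ.comp ψ, fun r x => ?_, ?_⟩
      · have hx : r ^ q ^ (u + 1) * x = (r ^ q ^ u) ^ q * x := by
          rw [show q ^ (u + 1) = q ^ u * q from pow_succ q u, pow_mul]
        simp only [AddMonoidHom.comp_apply]
        rw [hx, hψ]
        exact h1 r (ψ x)
      · have hσ : ∑ j ∈ Finset.range (u + 1), q ^ j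
            = (∑ j ∈ Finset.range u, q ^ j) * q + 1 := by
          rw [Finset.sum_range_succ']
          simp [pow_succ, Finset.sum_mul]
        simp only [AddMonoidHom.comp_apply]
        rw [hσ, pow_add, pow_mul, pow_one, hψ, hψd, mul_one]
        exact h2
  refine ⟨e₁, fun e he => ?_⟩
  set u := e / e₁ with hu
  set k := e % e₁ with hk
  have hek : e₁ * u + k = e := Nat.div_add_mod e e₁
  have hu1 : 1 ≤ u := Nat.one_le_div_iff (by omega) |>.mpr he
  set σ := ∑ j ∈ Finset.range u, q ^ j with hσdef
  obtain ⟨Φ, hΦ1, hΦ2⟩ := main u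
  obtain ⟨θ, hθ1, hθ2⟩ := hFP k
  have hnat : q ^ u * p ^ k = p ^ e := by
    rw [hq, ← pow_mul, ← pow_add, hek]
  refine ⟨d ^ (σ * p ^ k), ?_, ?_⟩
  · have h1 : d ^ (σ * p ^ k) ∈ a ^ (m * (σ * p ^ k)) := by
      rw [pow_mul a m]
      exact Ideal.pow_mem_pow hd _
    refine Ideal.pow_le_pow_right ?_ h1
    have hqσ : q ^ u ≤ q * σ := by
      have h2 : q ^ u = q * q ^ (u - 1) := by
        rw [← pow_succ']
        congr 1
        omega
      rw [h2]
      refine Nat.mul_le_mul_left q ?_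
      exact Finset.single_le_sum (f := fun j => q ^ j) (fun _ _ => Nat.zero_le _)
        (Finset.mem_range.mpr (by omega))
    have key : t * ((p : ℝ) ^ e - 1) ≤ ((m * (σ * p ^ k) : ℕ) : ℝ) := by
      have hpk : (0:ℝ) < (p : ℝ) ^ k := by positivity
      have hpe : (p : ℝ) ^ e = (q : ℝ) ^ u * (p : ℝ) ^ k := by exact_mod_cast hnat.symm
      have hc1 : t * ((p : ℝ) ^ e - 1) ≤ t * (p : ℝ) ^ e := by nlinarith
      have hc2 : t * (p : ℝ) ^ e ≤ t * ((q : ℝ) * σ) * (p : ℝ) ^ k := by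
        rw [hpe, ← mul_assoc]
        refine mul_le_mul_of_nonneg_right ?_ hpk.le
        refine mul_le_mul_of_nonneg_left ?_ ht
        exact_mod_cast hqσ
      have hc3 : t * ((q : ℝ) * σ) * (p : ℝ) ^ k ≤ (m : ℝ) * σ * (p : ℝ) ^ k := by
        have hσ0 : (0:ℝ) ≤ (σ : ℝ) := by positivity
        have htq : t * (q : ℝ) ≤ (m : ℝ) := by exact_mod_cast hm
        nlinarith [mul_le_mul_of_nonneg_right
          (mul_le_mul_of_nonneg_right htq hσ0) hpk.le]
      push_cast
      nlinarith
    calc ⌊t * ((p : ℝ) ^ e - 1)⌋₊ ≤ ⌊((m * (σ * p ^ k) : ℕ) : ℝ)⌋₊ := Nat.floor_le_floor key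
    _ = m * (σ * p ^ k) := Nat.floor_natCast _
  · refine ⟨Φ.comp θ, fun r x => ?_, ?_⟩
    · have h1 : r ^ p ^ e * x = (r ^ q ^ u) ^ p ^ k * x := by
        rw [← pow_mul, hnat]
      simp only [AddMonoidHom.comp_apply]
      rw [h1, hθ1]
      exact hΦ1 r (θ x)
    · have h1 : d ^ (σ * p ^ k) = (d ^ σ) ^ p ^ k * 1 := by
        rw [mul_one, pow_mul]
      simp only [AddMonoidHom.comp_apply]
      rw [h1, hθ1, hθ2, mul_one]
      exact hΦ2

end Aux

/-- `c(a) + c(b) ≥ c(a + b)` for ideals of positive height in an F-finite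
F-pure local ring. -/
theorem stmt16 (R : Type*) [CommRing R] [IsNoetherianRing R] [IsReduced R] [IsLocalRing R]
    (p : ℕ) (hp : p.Prime) [CharP R p] (hFF : FFinite R p) (hFP : FPureRing R p)
    (a b : Ideal R) (hha : 0 < idealHeight a) (hhb : 0 < idealHeight b) :
    fpt R p (a ⊔ b) ≤ fpt R p a + fpt R p b := by
  classical
  have hp1 : 1 < p := hp.one_lt
  have hzero : ∀ I : Ideal R, FPurePair R p I 0 := fun I =>
    ⟨0, fun e _ => ⟨1, by simp, hFP e⟩⟩
  have hmem : ∀ I : Ideal R, (0:ℝ) ∈ {s : ℝ | 0 ≤ s ∧ FPurePair R p I s} := fun I =>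
    ⟨le_rfl, hzero I⟩
  have hnonneg : ∀ I : Ideal R, 0 ≤ fpt R p I := by
    intro I
    by_cases h : BddAbove {s : ℝ | 0 ≤ s ∧ FPurePair R p I s}
    · exact le_csSup h (hmem I)
    · rw [fpt, Real.sSup_of_not_bddAbove h]
  have hSab : ∀ (I J : Ideal R), I ≤ J →
      {s : ℝ | 0 ≤ s ∧ FPurePair R p I s} ⊆ {s : ℝ | 0 ≤ s ∧ FPurePair R p J s} := by
    rintro I J hIJ s ⟨hs0, e₀, hse⟩
    refine ⟨hs0, e₀, fun e he => ?_⟩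
    obtain ⟨d, hd, hsplit⟩ := hse e he
    exact ⟨d, Ideal.pow_right_mono hIJ _ hd, hsplit⟩
  by_cases hba : BddAbove {s : ℝ | 0 ≤ s ∧ FPurePair R p a s}
  swap
  · have hnb : ¬ BddAbove {s : ℝ | 0 ≤ s ∧ FPurePair R p (a ⊔ b) s} :=
      fun h => hba (h.mono (hSab a (a ⊔ b) le_sup_left))
    rw [fpt, Real.sSup_of_not_bddAbove hnb]
    exact add_nonneg (hnonneg a) (hnonneg b)
  by_cases hbb : BddAbove {s : ℝ | 0 ≤ s ∧ FPurePair R p b s}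
  swap
  · have hnb : ¬ BddAbove {s : ℝ | 0 ≤ s ∧ FPurePair R p (a ⊔ b) s} :=
      fun h => hbb (h.mono (hSab b (a ⊔ b) le_sup_right))
    rw [fpt, Real.sSup_of_not_bddAbove hnb]
    exact add_nonneg (hnonneg a) (hnonneg b)
  rw [fpt]
  refine Real.sSup_le ?_ (add_nonneg (hnonneg a) (hnonneg b))
  rintro s ⟨hs0, e₀, hse⟩
  refine le_of_forall_sub_le ?_
  intro ε hε
  obtain ⟨E, hE⟩ := pow_unbounded_of_one_lt (y := (p : ℝ)) ((s + 1) / ε)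
    (by exact_mod_cast hp1)
  set e := max (max e₀ E) 1 with hedef
  have he₀ : e₀ ≤ e := le_max_of_le_left (le_max_left _ _)
  have heE : E ≤ e := le_max_of_le_left (le_max_right _ _)
  have he1 : 1 ≤ e := le_max_right _ _
  set Q : ℝ := (p : ℝ) ^ e with hQ
  have hQ0 : (0:ℝ) < Q := by positivity
  have hQE : (s + 1) / ε < Q :=
    lt_of_lt_of_le hE (pow_le_pow_right₀ (by exact_mod_cast hp1.le) heE)
  obtain ⟨d, hd, ψ, hψ, hψd⟩ := hse e he₀
  set n := ⌊s * (Q - 1)⌋₊ with hn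
  have hd2 : d ∈ ∑ i ∈ Finset.range (n + 1), a ^ i * b ^ (n - i) := sup_pow_le a b n hd
  obtain ⟨g, hg, hgd⟩ := mem_ideal_finset_sum hd2
  have hunit : ∃ i ∈ Finset.range (n + 1), IsUnit (ψ (g i)) := by
    by_contra hcon
    push_neg at hcon
    have h1 : ψ d ∈ IsLocalRing.maximalIdeal R := by
      rw [hgd, map_sum]
      exact Ideal.sum_mem _ fun i hi => (IsLocalRing.mem_maximalIdeal _).mpr (hcon i hi)
    rw [hψd] at h1
    exact (IsLocalRing.maximalIdeal.isMaximal R).ne_top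
      (Ideal.eq_top_of_isUnit_mem _ h1 isUnit_one)
  obtain ⟨i, hi, hiu⟩ := hunit
  have hin : i ≤ n := Finset.mem_range_succ_iff.mp hi
  have hsplit : SplitsFrob R (p ^ e) (g i) := by
    refine ⟨AddMonoidHom.mk' (fun x => (↑hiu.unit⁻¹ : R) * ψ x)
      (fun x y => by simp [map_add, mul_add]), fun r x => ?_, ?_⟩
    · simp only [AddMonoidHom.mk'_apply]
      rw [hψ]
      ring
    · simp only [AddMonoidHom.mk'_apply]
      exact IsUnit.val_inv_mul hiu
  have hga : g i ∈ a ^ i := Ideal.mul_le_left (hg i hi)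
  have hgb : g i ∈ b ^ (n - i) := Ideal.mul_le_right (hg i hi)
  have hta : FPurePair R p a ((i : ℝ) / Q) := by
    refine fpurePair_of_strong hp1 hFP (by positivity) he1 (m := i) ?_ hga hsplit
    rw [show ((p : ℝ)) ^ e = Q from rfl, div_mul_cancel₀ _ hQ0.ne']
  have htb : FPurePair R p b (((n - i : ℕ) : ℝ) / Q) := by
    refine fpurePair_of_strong hp1 hFP (by positivity) he1 (m := n - i) ?_ hgb hsplit
    rw [show ((p : ℝ)) ^ e = Q from rfl, div_mul_cancel₀ _ hQ0.ne']
  have h1 : (i : ℝ) / Q ≤ fpt R p a := le_csSup hba ⟨by positivity, hta⟩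
  have h2 : ((n - i : ℕ) : ℝ) / Q ≤ fpt R p b := le_csSup hbb ⟨by positivity, htb⟩
  have hsum : (i : ℝ) / Q + ((n - i : ℕ) : ℝ) / Q = (n : ℝ) / Q := by
    rw [← add_div]
    congr 1
    push_cast [Nat.cast_sub hin]
    ring
  have hfl : s * (Q - 1) < (n : ℝ) + 1 := Nat.lt_floor_add_one _
  have hεQ : s + 1 < ε * Q := by
    rw [div_lt_iff₀ hε] at hQE
    linarith [hQE]
  have hkey : s - ε ≤ (n : ℝ) / Q := by
    rw [le_div_iff₀ hQ0]
    nlinarith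
  calc s - ε ≤ (n : ℝ) / Q := hkey
  _ = (i : ℝ) / Q + ((n - i : ℕ) : ℝ) / Q := hsum.symm
  _ ≤ fpt R p a + fpt R p b := add_le_add h1 h2
end
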